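/- arXiv:2301.09979 — 8 statements merged into one kernel-verified Lean document; each statement's English description precedes it below -/
import Mathlib

section
/- Let G be a finite simple isolate-free graph on n vertices with maximum degree Δ(G), and let Ψ be a total coalition partition of G. If A₁,B₁,A₂,B₂,…,A_m,B_m are 2m pairwise distinct classes of Ψ such that A_i and B_i form a total coalition for each i (i.e., these pairs form a matching of size m in the total coalition graph TCG(G,Ψ)), then m ≤ Δ(G). -/
open scoped Classical

variable {V : Type*}

/-- `S` is a total dominating set of `G`: every vertex of `G` has a neighbor in `S`. -/
def TotalDomSet (G : SimpleGraph V) (S : Finset V) : Prop :=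
  ∀ v : V, ∃ u ∈ S, G.Adj v u

/-- Two disjoint sets `A`, `B` form a total coalition in `G` if neither is a total
dominating set but their union is. -/
def TotalCoalition [DecidableEq V] (G : SimpleGraph V) (A B : Finset V) : Prop :=
  Disjoint A B ∧ ¬ TotalDomSet G A ∧ ¬ TotalDomSet G B ∧ TotalDomSet G (A ∪ B)

/-- A graph is isolate-free if every vertex has a neighbor. -/
def IsolateFree (G : SimpleGraph V) : Prop :=
  ∀ v : V, ∃ u : V, G.Adj v u

/-- `Ψ` is a total coalition partition of `G`: a partition of the vertex set into
nonempty classes, none of which is a total dominating set, such that every class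
forms a total coalition with at least one other class. -/
def IsTCPartition [DecidableEq V] (G : SimpleGraph V) (Ψ : Finset (Finset V)) : Prop :=
  (∀ C ∈ Ψ, C.Nonempty) ∧
  (∀ v : V, ∃! C, C ∈ Ψ ∧ v ∈ C) ∧
  (∀ C ∈ Ψ, ¬ TotalDomSet G C) ∧
  (∀ C ∈ Ψ, ∃ D ∈ Ψ, D ≠ C ∧ TotalCoalition G C D)

/-- The total coalition graph `TCG(G,Ψ)`: vertices are the classes of `Ψ`, and two
classes are adjacent iff they form a total coalition. -/
def TCG [DecidableEq V] (G : SimpleGraph V) (Ψ : Finset (Finset V)) :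
    SimpleGraph {C // C ∈ Ψ} where
  Adj C D := C ≠ D ∧ TotalCoalition G (C : Finset V) (D : Finset V)
  symm := by
    constructor
    rintro C D ⟨hne, hd, hA, hB, hU⟩
    exact ⟨hne.symm, hd.symm, hB, hA, by rwa [Finset.union_comm]⟩
  loopless := by constructor; rintro C ⟨hne, _⟩; exact hne rfl

/-- If `2m` pairwise distinct classes of a total coalition partition form `m` total
coalition pairs (a matching of size `m` in `TCG(G,Ψ)`), then `m ≤ Δ(G)`. -/
theorem statement_1 [Fintype V] [DecidableEq V]
    (G : SimpleGraph V) [DecidableRel G.Adj] (hG : IsolateFree G)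
    (Ψ : Finset (Finset V)) (hΨ : IsTCPartition G Ψ)
    (m : ℕ) (A B : Fin m → Finset V)
    (hA : ∀ i, A i ∈ Ψ) (hB : ∀ i, B i ∈ Ψ)
    (hinj : Function.Injective (Sum.elim A B))
    (hcoal : ∀ i, TotalCoalition G (A i) (B i)) :
    m ≤ G.maxDegree := by
  rcases Nat.eq_zero_or_pos m with hm | hm
  · simp [hm]
  obtain ⟨v0, -⟩ := hΨ.1 (A ⟨0, hm⟩) (hA _)
  set v := v0 with hv
  choose u hu hadj using fun i => (hcoal i).2.2.2 v
  have hclass : ∀ i : Fin m, A i = B i → False := by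
    intro i h
    have : (Sum.inl i : Fin m ⊕ Fin m) = Sum.inr i := hinj h
    exact Sum.inl_ne_inr this
  have hinjU : Function.Injective u := by
    intro i j hij
    by_contra hne
    obtain ⟨C, hC, huniq⟩ := hΨ.2.1 (u i)
    have hi := Finset.mem_union.mp (hu i)
    have hj : u i ∈ A j ∪ B j := by rw [hij]; exact hu j
    have hj' := Finset.mem_union.mp hj
    have key : ∀ (x y : Fin m ⊕ Fin m),
        Sum.elim A B x = Sum.elim A B y → x = y := fun x y h => hinj h
    rcases hi with hi | hi <;> rcases hj' with hj' | hj'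
    · have : A i = A j :=
        (huniq _ ⟨hA i, hi⟩).trans (huniq _ ⟨hA j, hj'⟩).symm
      exact hne (Sum.inl_injective (key (Sum.inl i) (Sum.inl j) this))
    · have : A i = B j :=
        (huniq _ ⟨hA i, hi⟩).trans (huniq _ ⟨hB j, hj'⟩).symm
      exact Sum.inl_ne_inr (key (Sum.inl i) (Sum.inr j) this)
    · have : B i = A j :=
        (huniq _ ⟨hB i, hi⟩).trans (huniq _ ⟨hA j, hj'⟩).symm
      exact Sum.inr_ne_inl (key (Sum.inr i) (Sum.inl j) this)
    · have : B i = B j :=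
        (huniq _ ⟨hB i, hi⟩).trans (huniq _ ⟨hB j, hj'⟩).symm
      exact hne (Sum.inr_injective (key (Sum.inr i) (Sum.inr j) this))
  have hdeg : m ≤ G.degree v := by
    have : Fintype.card (Fin m) ≤ Fintype.card (G.neighborSet v) := by
      apply Fintype.card_le_of_injective
        (fun i => ⟨u i, (G.mem_neighborSet v (u i)).mpr (hadj i)⟩)
      intro i j h
      exact hinjU (Subtype.mk_eq_mk.mp h)
    rwa [G.card_neighborSet_eq_degree v, Fintype.card_fin] at this
  exact hdeg.trans (G.degree_le_maxDegree v)
end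

section
/- Let G be a finite simple isolate-free graph on n vertices with maximum degree Δ = Δ(G), and let Ψ be a total coalition partition of G. If there exist 2Δ pairwise distinct classes A₁,B₁,…,A_Δ,B_Δ of Ψ such that A_i and B_i form a total coalition for each i (i.e., the total coalition graph TCG(G,Ψ) has a matching of size Δ), then Ψ has exactly 2Δ classes, and for each i the union A_i ∪ B_i has cardinality exactly n/Δ. -/
open scoped Classical

variable {V : Type*}

/-- If a total coalition partition admits a matching of size `G.maxDegree(G)` in its total
coalition graph, then it has exactly `2G.maxDegree(G)` classes and every matched pair of
classes has union of cardinality exactly `n / G.maxDegree(G)`. -/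
theorem statement_3 [Fintype V] [DecidableEq V]
    (G : SimpleGraph V) [DecidableRel G.Adj] (hG : IsolateFree G)
    (Ψ : Finset (Finset V)) (hΨ : IsTCPartition G Ψ)
    (A B : Fin G.maxDegree → Finset V)
    (hA : ∀ i, A i ∈ Ψ) (hB : ∀ i, B i ∈ Ψ)
    (hinj : Function.Injective (Sum.elim A B))
    (hcoal : ∀ i, TotalCoalition G (A i) (B i)) :
    Ψ.card = 2 * G.maxDegree ∧
    ∀ i, (A i ∪ B i).card * G.maxDegree = Fintype.card V := by
  classical
  obtain ⟨hne, huniq, hnotTD, _⟩ := hΨ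
  rcases isEmpty_or_nonempty V with hV | hV
  · have hΨe : Ψ = ∅ := by
      rw [Finset.eq_empty_iff_forall_notMem]
      intro C hC
      obtain ⟨v, _⟩ := hne C hC
      exact (IsEmpty.false v)
    have hG.maxDegree0 : G.maxDegree = 0 := by
      simp [SimpleGraph.maxDegree, Finset.univ_eq_empty]
    constructor
    · simp [hΨe, hG.maxDegree0]
    · intro i
      have := i.isLt
      omega
  · -- distinct classes are disjoint
    have hdisj : ∀ C ∈ Ψ, ∀ D ∈ Ψ, C ≠ D → Disjoint C D := by
      intro C hC D hD hCD
      rw [Finset.disjoint_left]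
      intro v hvC hvD
      obtain ⟨E, _, hEuniq⟩ := huniq v
      exact hCD ((hEuniq C ⟨hC, hvC⟩).trans (hEuniq D ⟨hD, hvD⟩).symm)
    set U : Fin G.maxDegree → Finset V := fun i => A i ∪ B i with hU
    have hAB : ∀ i j, A i ≠ B j := by
      intro i j h
      have : (Sum.inl i : Fin G.maxDegree ⊕ Fin G.maxDegree) = Sum.inr j := hinj h
      exact Sum.inl_ne_inr this
    have hAA : ∀ i j, i ≠ j → A i ≠ A j := by
      intro i j hij h
      exact hij (Sum.inl.inj (hinj (a₁ := Sum.inl i) (a₂ := Sum.inl j) h))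
    have hBB : ∀ i j, i ≠ j → B i ≠ B j := by
      intro i j hij h
      exact hij (Sum.inr.inj (hinj (a₁ := Sum.inr i) (a₂ := Sum.inr j) h))
    have hUdisj : ∀ i j, i ≠ j → Disjoint (U i) (U j) := by
      intro i j hij
      simp only [hU, Finset.disjoint_union_left, Finset.disjoint_union_right]
      refine ⟨⟨hdisj _ (hA i) _ (hA j) (hAA i j hij),
        hdisj _ (hB i) _ (hA j) fun h => hAB j i h.symm⟩,
        ⟨hdisj _ (hA i) _ (hB j) (hAB i j),
         hdisj _ (hB i) _ (hB j) (hBB i j hij)⟩⟩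
    have hUTD : ∀ i, TotalDomSet G (U i) := fun i => (hcoal i).2.2.2
    -- key per-vertex lemma
    have key : ∀ u : V, (∀ i, ((U i) ∩ G.neighborFinset u).card = 1) ∧ G.degree u = G.maxDegree := by
      intro u
      set S : Fin G.maxDegree → Finset V := fun i => U i ∩ G.neighborFinset u with hS
      have hSne : ∀ i, 1 ≤ (S i).card := by
        intro i
        obtain ⟨w, hw, hadj⟩ := hUTD i u
        have : w ∈ S i := Finset.mem_inter.2 ⟨hw, (G.mem_neighborFinset u w).2 hadj⟩
        exact Finset.card_pos.2 ⟨w, this⟩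
      have hSdisj : ∀ i ∈ Finset.univ, ∀ j ∈ Finset.univ, i ≠ j → Disjoint (S i) (S j) := by
        intro i _ j _ hij
        exact (hUdisj i j hij).mono Finset.inter_subset_left Finset.inter_subset_left
      have hsum : ∑ i : Fin G.maxDegree, (S i).card = (Finset.univ.biUnion S).card :=
        (Finset.card_biUnion hSdisj).symm
      have hsub : Finset.univ.biUnion S ⊆ G.neighborFinset u := by
        intro w hw
        obtain ⟨i, _, hwi⟩ := Finset.mem_biUnion.1 hw
        exact (Finset.mem_inter.1 hwi).2
      have hle : ∑ i : Fin G.maxDegree, (S i).card ≤ G.degree u := by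
        rw [hsum]
        calc (Finset.univ.biUnion S).card ≤ (G.neighborFinset u).card :=
              Finset.card_le_card hsub
          _ = G.degree u := (G.card_neighborFinset_eq_degree u).symm
      have hdle : G.degree u ≤ G.maxDegree := G.degree_le_maxDegree u
      have hge : G.maxDegree ≤ ∑ i : Fin G.maxDegree, (S i).card := by
        calc G.maxDegree = ∑ _i : Fin G.maxDegree, 1 := by simp
          _ ≤ ∑ i : Fin G.maxDegree, (S i).card := Finset.sum_le_sum fun i _ => hSne i
      have hdeg : G.degree u = G.maxDegree := le_antisymm hdle (le_trans hge hle)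
      have hsumeq : ∑ i : Fin G.maxDegree, (S i).card = G.maxDegree := by omega
      refine ⟨?_, hdeg⟩
      intro i
      by_contra h
      have h2 : 2 ≤ (S i).card := Nat.lt_of_le_of_ne (hSne i) fun e => h e.symm
      have : ∑ j : Fin G.maxDegree, (S j).card = (S i).card + ∑ j ∈ Finset.univ.erase i, (S j).card :=
        (Finset.add_sum_erase _ _ (Finset.mem_univ i)).symm
      have herase : (G.maxDegree - 1 : ℕ) ≤ ∑ j ∈ Finset.univ.erase i, (S j).card := by
        calc (G.maxDegree - 1 : ℕ) = ∑ _j ∈ Finset.univ.erase i, 1 := by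
              simp [Finset.card_erase_of_mem, Finset.card_univ]
          _ ≤ ∑ j ∈ Finset.univ.erase i, (S j).card :=
              Finset.sum_le_sum fun j _ => hSne j
      have hDpos : 0 < G.maxDegree := i.pos
      omega
    have hDpos : 1 ≤ G.maxDegree := by
      obtain ⟨u⟩ := hV
      obtain ⟨u', hu'⟩ := hG u
      have h1 : 0 < G.degree u := by
        rw [SimpleGraph.degree_pos_iff_exists_adj]; exact ⟨u', hu'⟩
      have := (key u).2
      omega
    -- counting: each union has card * G.maxDegree = n
    have hcount : ∀ i, (U i).card * G.maxDegree = Fintype.card V := by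
      intro i
      have h1 : ∑ u : V, ((U i) ∩ G.neighborFinset u).card = Fintype.card V := by
        rw [Finset.sum_congr rfl fun u _ => (key u).1 i]
        simp [Finset.card_univ]
      have h2 : ∑ u : V, ((U i) ∩ G.neighborFinset u).card = (U i).card * G.maxDegree := by
        have hrw : ∀ u : V, ((U i) ∩ G.neighborFinset u).card
            = ∑ w ∈ U i, if G.Adj u w then 1 else 0 := by
          intro u
          have hfe : (U i) ∩ G.neighborFinset u = (U i).filter (fun w => G.Adj u w) := by
            ext w
            simp [SimpleGraph.mem_neighborFinset, Finset.mem_filter, Finset.mem_inter,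
              and_comm]
          rw [hfe, Finset.card_filter]
        rw [Finset.sum_congr rfl fun u _ => hrw u, Finset.sum_comm]
        have : ∀ w ∈ U i, ∑ u : V, (if G.Adj u w then 1 else 0) = G.maxDegree := by
          intro w _
          have : ∑ u : V, (if G.Adj u w then 1 else 0)
              = (Finset.univ.filter fun u => G.Adj u w).card := by
            rw [Finset.card_filter]
          rw [this]
          have : (Finset.univ.filter fun u => G.Adj u w) = G.neighborFinset w := by
            ext u
            simp [SimpleGraph.mem_neighborFinset, G.adj_comm]
          rw [this, G.card_neighborFinset_eq_degree w, (key w).2]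
        rw [Finset.sum_congr rfl this]
        simp [mul_comm]
      omega
    -- the unions cover V
    have hsumU : ∑ i : Fin G.maxDegree, (U i).card = Fintype.card V := by
      have : (∑ i : Fin G.maxDegree, (U i).card) * G.maxDegree = Fintype.card V * G.maxDegree := by
        rw [Finset.sum_mul]
        rw [Finset.sum_congr rfl fun i _ => hcount i]
        simp [Finset.card_univ, mul_comm]
      exact Nat.eq_of_mul_eq_mul_right hDpos this
    have hcover : ∀ v : V, ∃ i, v ∈ U i := by
      intro v
      by_contra h
      push_neg at h
      have hsub : Finset.univ.biUnion U ⊆ Finset.univ.erase v := by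
        intro w hw
        obtain ⟨i, _, hwi⟩ := Finset.mem_biUnion.1 hw
        refine Finset.mem_erase.2 ⟨?_, Finset.mem_univ w⟩
        rintro rfl
        exact h i hwi
      have hcard : (Finset.univ.biUnion U).card = Fintype.card V := by
        rw [Finset.card_biUnion fun i _ j _ hij => hUdisj i j hij]
        exact hsumU
      have := Finset.card_le_card hsub
      rw [hcard, Finset.card_erase_of_mem (Finset.mem_univ v), Finset.card_univ] at this
      have hpos : 0 < Fintype.card V := Fintype.card_pos_iff.2 ⟨v⟩
      omega
    -- Ψ equals the image of the matched classes
    have hΨeq : Ψ = Finset.image (Sum.elim A B) Finset.univ := by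
      ext C
      simp only [Finset.mem_image, Finset.mem_univ, true_and]
      constructor
      · intro hC
        obtain ⟨v, hv⟩ := hne C hC
        obtain ⟨i, hi⟩ := hcover v
        rcases Finset.mem_union.1 hi with hvA | hvB
        · obtain ⟨E, _, hEuniq⟩ := huniq v
          exact ⟨Sum.inl i, ((hEuniq (A i) ⟨hA i, hvA⟩).trans (hEuniq C ⟨hC, hv⟩).symm)⟩
        · obtain ⟨E, _, hEuniq⟩ := huniq v
          exact ⟨Sum.inr i, ((hEuniq (B i) ⟨hB i, hvB⟩).trans (hEuniq C ⟨hC, hv⟩).symm)⟩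
      · rintro ⟨x, rfl⟩
        cases x with
        | inl i => exact hA i
        | inr i => exact hB i
    constructor
    · rw [hΨeq, Finset.card_image_of_injective _ hinj]
      simp [Fintype.card_sum, two_mul]
    · exact hcount
end

section
/- Let G be a finite simple isolate-free graph with maximum degree Δ = Δ(G), and let Ψ be a total coalition partition of G. If some class C of Ψ forms a total coalition with exactly Δ other classes (i.e., C has degree Δ in the total coalition graph TCG(G,Ψ)), then the set of these Δ classes is a vertex cover of TCG(G,Ψ): every pair of classes of Ψ forming a total coalition contains at least one of these Δ classes. -/
open scoped Classical

variable {V : Type*}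

/-- If a class `C` of a total coalition partition forms a total coalition with exactly
`Δ(G)` other classes, then these `Δ(G)` classes form a vertex cover of `TCG(G,Ψ)`:
every total coalition pair of classes contains at least one of them. -/
theorem statement_4 [Fintype V] [DecidableEq V]
    (G : SimpleGraph V) [DecidableRel G.Adj] (hG : IsolateFree G)
    (Ψ : Finset (Finset V)) (hΨ : IsTCPartition G Ψ)
    (C : Finset V) (hC : C ∈ Ψ)
    (hdeg : (Ψ.filter fun D => D ≠ C ∧ TotalCoalition G C D).card = G.maxDegree) :
    ∀ D ∈ Ψ, ∀ E ∈ Ψ, D ≠ E → TotalCoalition G D E →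
      D ∈ Ψ.filter (fun X => X ≠ C ∧ TotalCoalition G C X) ∨
      E ∈ Ψ.filter (fun X => X ≠ C ∧ TotalCoalition G C X) := by
  obtain ⟨hnon, huniq, hnd, hcoal⟩ := hΨ
  have hCnd := hnd C hC
  rw [TotalDomSet] at hCnd
  push_neg at hCnd
  obtain ⟨v, hv⟩ := hCnd
  set P := Ψ.filter (fun X => X ≠ C ∧ TotalCoalition G C X) with hPdef
  have hPΨ : ∀ X ∈ P, X ∈ Ψ := fun X hX => Finset.mem_of_mem_filter X hX
  have key : ∀ X ∈ P, ((G.neighborFinset v) ∩ X).Nonempty := by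
    intro X hX
    rw [hPdef, Finset.mem_filter] at hX
    obtain ⟨hXΨ, hXC, _, _, _, hU⟩ := hX
    obtain ⟨u, hu, hadj⟩ := hU v
    rcases Finset.mem_union.mp hu with h | h
    · exact absurd hadj (hv u h)
    · exact ⟨u, Finset.mem_inter.mpr ⟨(G.mem_neighborFinset v u).mpr hadj, h⟩⟩
  have hclassdisj : ∀ X ∈ Ψ, ∀ Y ∈ Ψ, X ≠ Y → Disjoint X Y := by
    intro X hX Y hY hXY
    rw [Finset.disjoint_left]
    intro u huX huY
    obtain ⟨W, _, hWu⟩ := huniq u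
    exact hXY ((hWu X ⟨hX, huX⟩).trans (hWu Y ⟨hY, huY⟩).symm)
  have hdisj : ∀ X ∈ P, ∀ Y ∈ P, X ≠ Y →
      Disjoint (G.neighborFinset v ∩ X) (G.neighborFinset v ∩ Y) := by
    intro X hX Y hY hXY
    exact Finset.disjoint_of_subset_left (Finset.inter_subset_right)
      (Finset.disjoint_of_subset_right (Finset.inter_subset_right)
        (hclassdisj X (hPΨ X hX) Y (hPΨ Y hY) hXY))
  have hsub : P.biUnion (fun X => G.neighborFinset v ∩ X) ⊆ G.neighborFinset v := by
    intro u hu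
    obtain ⟨X, _, hu⟩ := Finset.mem_biUnion.mp hu
    exact (Finset.mem_inter.mp hu).1
  have hcard1 : P.card ≤ (P.biUnion (fun X => G.neighborFinset v ∩ X)).card := by
    rw [Finset.card_biUnion hdisj]
    calc P.card = ∑ _X ∈ P, 1 := by simp
    _ ≤ ∑ X ∈ P, (G.neighborFinset v ∩ X).card :=
      Finset.sum_le_sum (fun X hX => Finset.card_pos.mpr (key X hX))
  have hcard2 : (G.neighborFinset v).card ≤ P.card := by
    rw [G.card_neighborFinset_eq_degree, hdeg]
    exact G.degree_le_maxDegree v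
  have heq : P.biUnion (fun X => G.neighborFinset v ∩ X) = G.neighborFinset v :=
    Finset.eq_of_subset_of_card_le hsub (le_trans hcard2 hcard1)
  intro D hD E hE hDE ⟨_, _, _, hU⟩
  obtain ⟨u, hu, hadj⟩ := hU v
  have humem : u ∈ P.biUnion (fun X => G.neighborFinset v ∩ X) := by
    rw [heq]; exact (G.mem_neighborFinset v u).mpr hadj
  obtain ⟨X, hXP, huX⟩ := Finset.mem_biUnion.mp humem
  have huX : u ∈ X := (Finset.mem_inter.mp huX).2
  obtain ⟨W, _, hWu⟩ := huniq u
  have hXW : X = W := hWu X ⟨hPΨ X hXP, huX⟩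
  rcases Finset.mem_union.mp hu with h | h
  · left; rw [hWu D ⟨hD, h⟩, ← hXW]; exact hXP
  · right; rw [hWu E ⟨hE, h⟩, ← hXW]; exact hXP
end

section
/- For every finite simple isolate-free graph G there exists a finite simple graph H together with a total coalition partition π of H and a bijection φ from the vertex set of G to the classes of π such that two vertices u,v of G are adjacent in G if and only if the classes φ(u) and φ(v) form a total coalition in H. In other words, every isolate-free graph G is isomorphic to the total coalition graph TCG(H,π) for some graph H and total coalition partition π of H. -/
open scoped Classical

variable {V : Type*}

section Construction

variable [Fintype V] [DecidableEq V]

/-- auxiliary one-directional relation for the construction -/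
def Hrel (G : SimpleGraph V) : (V ⊕ V × V) → (V ⊕ V × V) → Prop
  | Sum.inr (v, w), Sum.inl y => y ≠ v ∧ (G.Adj v w ∨ y ≠ w)
  | _, _ => False

/-- the host graph -/
def Hgraph (G : SimpleGraph V) : SimpleGraph (V ⊕ V × V) where
  Adj a b := Hrel G a b ∨ Hrel G b a
  symm := ⟨fun _ _ h => h.symm⟩
  loopless := by
    constructor
    rintro (a | ⟨v, w⟩) (h | h) <;> exact h

lemma hrel_iff (G : SimpleGraph V) (a b : V ⊕ V × V) :
    Hrel G a b ↔ ∃ v w y, a = Sum.inr (v, w) ∧ b = Sum.inl y ∧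
      y ≠ v ∧ (G.Adj v w ∨ y ≠ w) := by
  rcases a with a | ⟨v, w⟩ <;> rcases b with b | ⟨x, z⟩ <;>
    simp [Hrel]

/-- the class of `v` -/
def Cl (v : V) : Finset (V ⊕ V × V) :=
  insert (Sum.inl v) ((Finset.univ : Finset V).image fun w => Sum.inr (v, w))

lemma mem_Cl (v : V) (a : V ⊕ V × V) :
    a ∈ Cl v ↔ a = Sum.inl v ∨ ∃ w, a = Sum.inr (v, w) := by
  simp [Cl, eq_comm]

lemma Cl_inj : Function.Injective (Cl (V := V)) := by
  intro u v h
  have : (Sum.inl u : V ⊕ V × V) ∈ Cl v := by rw [← h, mem_Cl]; left; rfl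
  rw [mem_Cl] at this
  rcases this with h' | ⟨w, h'⟩ <;> simp_all

lemma Cl_disjoint {u v : V} (h : u ≠ v) : Disjoint (Cl u) (Cl v) := by
  rw [Finset.disjoint_left]
  intro a ha hb
  rw [mem_Cl] at ha hb
  rcases ha with rfl | ⟨w, rfl⟩ <;> rcases hb with h' | ⟨w', h'⟩ <;> simp_all

lemma not_tds_Cl (G : SimpleGraph V) (v : V) : ¬ TotalDomSet (Hgraph G) (Cl v) := by
  intro h
  obtain ⟨u, hu, hadj⟩ := h (Sum.inl v)
  rw [mem_Cl] at hu
  rcases hadj with hr | hr <;> rw [hrel_iff] at hr <;>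
    obtain ⟨x, w, y, h1, h2, h3, h4⟩ := hr
  · rcases hu with h' | ⟨w', h'⟩ <;> simp_all
  · rcases hu with h' | ⟨w', h'⟩ <;> simp_all

lemma tds_union_iff (G : SimpleGraph V) {u v : V} (huv : u ≠ v) :
    TotalDomSet (Hgraph G) (Cl u ∪ Cl v) ↔ G.Adj u v := by
  constructor
  · intro h
    by_contra hadj
    obtain ⟨a, ha, hr⟩ := h (Sum.inr (u, v))
    rw [Finset.mem_union, mem_Cl, mem_Cl] at ha
    rcases hr with hr | hr <;> rw [hrel_iff] at hr <;>
      obtain ⟨x, w, y, h1, h2, h3, h4⟩ := hr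
    · simp_all
    · -- a = inl y, (u,v) matched: x = u, w = v
      obtain ⟨rfl⟩ : x = u ∧ w = v := by simp_all
      rcases ha with ⟨h'|⟨w', h'⟩⟩|⟨h'|⟨w', h'⟩⟩ <;> simp_all
  · intro hadj x
    rcases x with y | ⟨x, w⟩
    · -- base vertex inl y : dominated by tester (u,v) or (v,u)
      by_cases hy : y = u
      · refine ⟨Sum.inr (v, u), ?_, ?_⟩
        · rw [Finset.mem_union, mem_Cl, mem_Cl]; right; right; exact ⟨u, rfl⟩
        · right; rw [hrel_iff]
          exact ⟨v, u, y, rfl, rfl, by simp [hy, huv], Or.inl hadj.symm⟩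
      · refine ⟨Sum.inr (u, v), ?_, ?_⟩
        · rw [Finset.mem_union, mem_Cl, mem_Cl]; left; right; exact ⟨v, rfl⟩
        · right; rw [hrel_iff]
          exact ⟨u, v, y, rfl, rfl, hy, Or.inl hadj⟩
    · -- tester inr (x,w): dominated by inl u or inl v
      rcases eq_or_ne x u with rfl | hxu
      · refine ⟨Sum.inl v, by rw [Finset.mem_union, mem_Cl, mem_Cl]; right; left; rfl,
          Or.inl ?_⟩
        rw [hrel_iff]
        refine ⟨x, w, v, rfl, rfl, huv.symm, ?_⟩
        rcases eq_or_ne v w with rfl | hvw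
        · exact Or.inl hadj
        · exact Or.inr hvw
      · by_cases hcond : G.Adj x w ∨ u ≠ w
        · refine ⟨Sum.inl u, by rw [Finset.mem_union, mem_Cl]; left; left; rfl, Or.inl ?_⟩
          rw [hrel_iff]
          exact ⟨x, w, u, rfl, rfl, hxu.symm, hcond⟩
        · push_neg at hcond
          obtain ⟨hnadj, hw⟩ := hcond
          subst hw
          refine ⟨Sum.inl v, by rw [Finset.mem_union, mem_Cl, mem_Cl]; right; left; rfl,
            Or.inl ?_⟩
          rw [hrel_iff]
          refine ⟨x, u, v, rfl, rfl, ?_, Or.inr huv.symm⟩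
          intro h
          exact hnadj (h ▸ hadj.symm)

lemma tc_Cl_iff (G : SimpleGraph V) {u v : V} (huv : u ≠ v) :
    TotalCoalition (Hgraph G) (Cl u) (Cl v) ↔ G.Adj u v := by
  constructor
  · rintro ⟨_, _, _, h⟩; exact (tds_union_iff G huv).1 h
  · intro h
    exact ⟨Cl_disjoint huv, not_tds_Cl G u, not_tds_Cl G v, (tds_union_iff G huv).2 h⟩


def piW : Finset (Finset (V ⊕ V × V)) := Finset.univ.image Cl

lemma mem_piW (C : Finset (V ⊕ V × V)) : C ∈ (piW : Finset (Finset (V ⊕ V × V))) ↔ ∃ v, Cl v = C := by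
  simp [piW]

lemma inl_mem_Cl (v : V) : (Sum.inl v : V ⊕ V × V) ∈ Cl v := by
  rw [mem_Cl]; left; rfl

lemma inr_mem_Cl (v w : V) : (Sum.inr (v, w) : V ⊕ V × V) ∈ Cl v := by
  rw [mem_Cl]; right; exact ⟨w, rfl⟩

lemma isTCP_W (G : SimpleGraph V) (hG : IsolateFree G) :
    IsTCPartition (Hgraph G) (piW : Finset (Finset (V ⊕ V × V))) := by
  refine ⟨?_, ?_, ?_, ?_⟩
  · intro C hC
    obtain ⟨v, rfl⟩ := (mem_piW C).1 hC
    exact ⟨Sum.inl v, by rw [mem_Cl]; left; rfl⟩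
  · intro a
    obtain ⟨v, hav⟩ : ∃ v, a ∈ Cl v := by
      rcases a with v | ⟨v, w⟩
      · exact ⟨v, inl_mem_Cl v⟩
      · exact ⟨v, inr_mem_Cl v w⟩
    refine ⟨Cl v, ⟨(mem_piW _).2 ⟨v, rfl⟩, hav⟩, ?_⟩
    rintro D ⟨hD, haD⟩
    obtain ⟨u, rfl⟩ := (mem_piW D).1 hD
    by_contra hne
    have hne' : u ≠ v := fun h => hne (by rw [h])
    exact (Finset.disjoint_left.1 (Cl_disjoint hne')) haD hav
  · intro C hC
    obtain ⟨v, rfl⟩ := (mem_piW C).1 hC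
    exact not_tds_Cl G v
  · intro C hC
    obtain ⟨v, rfl⟩ := (mem_piW C).1 hC
    obtain ⟨u, hadj⟩ := hG v
    have hne : v ≠ u := G.ne_of_adj hadj
    refine ⟨Cl u, (mem_piW _).2 ⟨u, rfl⟩, fun h => hne (Cl_inj h).symm, ?_⟩
    exact (tc_Cl_iff G hne).2 hadj

noncomputable def isoW (G : SimpleGraph V) : G ≃g TCG (Hgraph G) piW := by
  refine RelIso.mk (Equiv.ofBijective (fun v => ⟨Cl v, (mem_piW _).2 ⟨v, rfl⟩⟩) ⟨?_, ?_⟩) ?_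
  · intro a b h
    exact Cl_inj (congrArg Subtype.val h)
  · rintro ⟨C, hC⟩
    obtain ⟨v, rfl⟩ := (mem_piW C).1 hC
    exact ⟨v, rfl⟩
  · intro a b
    show (TCG (Hgraph G) piW).Adj ⟨Cl a, _⟩ ⟨Cl b, _⟩ ↔ G.Adj a b
    constructor
    · rintro ⟨hne, hcoal⟩
      have hab : a ≠ b := fun h => hne (by simp [h])
      exact (tc_Cl_iff G hab).1 hcoal
    · intro h
      have hab : a ≠ b := G.ne_of_adj h
      exact ⟨fun he => hab (Cl_inj (congrArg Subtype.val he)),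
        (tc_Cl_iff G hab).2 h⟩

end Construction

section Transport

variable {W X : Type*} [DecidableEq W] [DecidableEq X]

lemma tds_image (e : W ≃ X) (H : SimpleGraph W) (S : Finset W) :
    TotalDomSet (H.comap e.symm) (S.image e) ↔ TotalDomSet H S := by
  constructor
  · intro h w
    obtain ⟨u, hu, hadj⟩ := h (e w)
    obtain ⟨u', hu', rfl⟩ := Finset.mem_image.1 hu
    refine ⟨u', hu', ?_⟩
    simpa [SimpleGraph.comap] using hadj
  · intro h x
    obtain ⟨u, hu, hadj⟩ := h (e.symm x)
    exact ⟨e u, Finset.mem_image_of_mem e hu, by simpa [SimpleGraph.comap] using hadj⟩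

lemma tc_image (e : W ≃ X) (H : SimpleGraph W) (A B : Finset W) :
    TotalCoalition (H.comap e.symm) (A.image e) (B.image e) ↔ TotalCoalition H A B := by
  unfold TotalCoalition
  rw [← Finset.image_union, tds_image, tds_image, tds_image,
    Finset.disjoint_image e.injective]

lemma isTCP_image (e : W ≃ X) (H : SimpleGraph W) (π : Finset (Finset W))
    (h : IsTCPartition H π) :
    IsTCPartition (H.comap e.symm) (π.image (Finset.image e)) := by
  obtain ⟨h1, h2, h3, h4⟩ := h
  refine ⟨?_, ?_, ?_, ?_⟩
  · intro C hC
    obtain ⟨D, hD, rfl⟩ := Finset.mem_image.1 hC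
    exact (h1 D hD).image e
  · intro x
    obtain ⟨C, ⟨hC, hmem⟩, huniq⟩ := h2 (e.symm x)
    refine ⟨C.image e, ⟨Finset.mem_image_of_mem _ hC,
      by simpa using Finset.mem_image_of_mem e hmem⟩, ?_⟩
    rintro D ⟨hD, hxD⟩
    obtain ⟨D', hD', rfl⟩ := Finset.mem_image.1 hD
    have hx : e.symm x ∈ D' := by
      obtain ⟨y, hy, hyx⟩ := Finset.mem_image.1 hxD
      have : y = e.symm x := by rw [← hyx]; simp
      exact this ▸ hy
    rw [huniq D' ⟨hD', hx⟩]
  · intro C hC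
    obtain ⟨D, hD, rfl⟩ := Finset.mem_image.1 hC
    exact fun h => h3 D hD ((tds_image e H D).1 h)
  · intro C hC
    obtain ⟨D, hD, rfl⟩ := Finset.mem_image.1 hC
    obtain ⟨D', hD', hne, hc⟩ := h4 D hD
    exact ⟨D'.image e, Finset.mem_image_of_mem _ hD',
      fun h => hne (Finset.image_injective e.injective h),
      (tc_image e H D D').2 hc⟩

noncomputable def tcg_iso (e : W ≃ X) (H : SimpleGraph W) (π : Finset (Finset W)) :
    TCG H π ≃g TCG (H.comap e.symm) (π.image (Finset.image e)) := by
  refine RelIso.mk (Equiv.ofBijective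
    (fun C => ⟨(C : Finset W).image e, Finset.mem_image_of_mem _ C.2⟩) ⟨?_, ?_⟩) ?_
  · intro C D h
    exact Subtype.ext (Finset.image_injective e.injective (congrArg Subtype.val h))
  · rintro ⟨D, hD⟩
    obtain ⟨C, hC, rfl⟩ := Finset.mem_image.1 hD
    exact ⟨⟨C, hC⟩, rfl⟩
  · intro C D
    show (TCG _ _).Adj ⟨_, _⟩ ⟨_, _⟩ ↔ (TCG H π).Adj C D
    constructor
    · rintro ⟨hne, hc⟩
      refine ⟨fun h => hne (by rw [h]), (tc_image e H _ _).1 hc⟩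
    · rintro ⟨hne, hc⟩
      exact ⟨fun h => hne (Subtype.ext (Finset.image_injective e.injective
        (congrArg Subtype.val h))), (tc_image e H _ _).2 hc⟩

end Transport

/-- Every finite isolate-free graph `G` is isomorphic to the total coalition graph
`TCG(H,π)` for some finite graph `H` and total coalition partition `π` of `H`. -/
theorem statement_5 [Fintype V] [DecidableEq V] (G : SimpleGraph V)
    (hG : IsolateFree G) :
    ∃ (n : ℕ) (H : SimpleGraph (Fin n)) (π : Finset (Finset (Fin n))),
      IsTCPartition H π ∧ Nonempty (G ≃g TCG H π) := by
  classical
  let e := Fintype.equivFin (V ⊕ V × V)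
  refine ⟨Fintype.card (V ⊕ V × V), (Hgraph G).comap e.symm,
    (piW : Finset (Finset (V ⊕ V × V))).image (Finset.image e), ?_, ?_⟩
  · exact isTCP_image e (Hgraph G) piW (isTCP_W G hG)
  · exact ⟨(isoW G).trans (tcg_iso e (Hgraph G) piW)⟩
end

section
/- For every even integer Δ ≥ 4 there exists a finite simple isolate-free graph G with maximum degree Δ(G) = Δ and a total coalition partition of G with at least Δ²/4 + Δ + 1 classes; hence TC(G) ≥ Δ²/4 + Δ + 1. -/
open scoped Classical

variable {V : Type*}

inductive Vx (k : ℕ) : Type where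
  | x : Fin (k+1) → Vx k
  | y : Fin (k+1) → Fin k → Vx k
  | hh : Fin (k+1) → Fin k → Vx k
  | c : Fin (k+1) → Vx k
  | d : Fin (k+1) → Vx k
  deriving DecidableEq, Fintype

namespace Vx

def rB {k : ℕ} : Vx k → Vx k → Bool
  | x j, y l _ => j == l
  | hh s t, y l _ => s.succAbove t == l
  | hh s t, hh s' t' => (s.succAbove t == s'.succAbove t') && (s != s')
  | hh s _, d j => s == j
  | c j, x l => j != l
  | c j, y l _ => j == l
  | d j, d l => j != l
  | _, _ => false

def Gk (k : ℕ) : SimpleGraph (Vx k) where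
  Adj a b := (rB a b || rB b a) = true
  symm := by constructor; intro a b hab; rwa [Bool.or_comm]
  loopless := by constructor; intro a; cases a <;> simp [rB]

instance {k : ℕ} : DecidableRel (Gk k).Adj := fun _ _ => instDecidableEqBool _ _

lemma adj_def {k : ℕ} (a b : Vx k) : (Gk k).Adj a b ↔ (rB a b = true ∨ rB b a = true) := by
  show (rB a b || rB b a) = true ↔ _
  simp

def inH {k : ℕ} (j : Fin (k+1)) : Vx k → Bool
  | x l => l == j
  | hh s _ => s == j
  | c l => l == j
  | d l => l == j
  | y _ _ => false

def Hcl (k : ℕ) (j : Fin (k+1)) : Finset (Vx k) :=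
  Finset.univ.filter (fun a => inH j a = true)

lemma mem_Hcl {k : ℕ} {j : Fin (k+1)} {a : Vx k} : a ∈ Hcl k j ↔ inH j a = true := by
  simp [Hcl]

def Psi (k : ℕ) : Finset (Finset (Vx k)) :=
  (Finset.univ.image fun j => Hcl k j) ∪
  (Finset.univ.image fun p : Fin (k+1) × Fin k => ({y p.1 p.2} : Finset (Vx k)))

lemma mem_Psi {k : ℕ} {C : Finset (Vx k)} :
    C ∈ Psi k ↔ (∃ j, C = Hcl k j) ∨ (∃ p : Fin (k+1) × Fin k, C = {y p.1 p.2}) := by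
  simp [Psi, eq_comm]

lemma notTDS_Hcl {k : ℕ} (j : Fin (k+1)) : ¬ TotalDomSet (Gk k) (Hcl k j) := by
  intro hT
  obtain ⟨u, hu, hadj⟩ := hT (x j)
  rw [adj_def] at hadj
  rw [mem_Hcl] at hu
  cases u <;> simp_all [rB, inH]

lemma notTDS_y {k : ℕ} (j : Fin (k+1)) (i : Fin k) :
    ¬ TotalDomSet (Gk k) ({y j i} : Finset (Vx k)) := by
  intro hT
  obtain ⟨u, hu, hadj⟩ := hT (y j i)
  rw [Finset.mem_singleton] at hu
  subst hu
  rw [adj_def] at hadj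
  simp [rB] at hadj

lemma TDS_union {k : ℕ} (hk : 0 < k) (j : Fin (k+1)) (i : Fin k) :
    TotalDomSet (Gk k) (Hcl k j ∪ {y j i}) := by
  intro v
  have hmem : ∀ a : Vx k, inH j a = true → a ∈ Hcl k j ∪ {y j i} :=
    fun a ha => Finset.mem_union_left _ (mem_Hcl.2 ha)
  have hymem : (y j i : Vx k) ∈ Hcl k j ∪ {y j i} :=
    Finset.mem_union_right _ (Finset.mem_singleton_self _)
  cases v with
  | x l =>
    by_cases hl : l = j
    · exact ⟨y j i, hymem, by rw [adj_def]; left; simp [rB, hl]⟩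
    · exact ⟨c j, hmem _ (by simp [inH]), by rw [adj_def]; right; simp [rB]; exact fun h => hl h.symm⟩
  | y l i' =>
    by_cases hl : l = j
    · exact ⟨x j, hmem _ (by simp [inH]), by rw [adj_def]; right; simp [rB, hl]⟩
    · obtain ⟨t, ht⟩ := Fin.exists_succAbove_eq (show l ≠ j from hl)
      exact ⟨hh j t, hmem _ (by simp [inH]), by rw [adj_def]; right; simp [rB, ht]⟩
  | hh s t =>
    by_cases h1 : s.succAbove t = j
    · exact ⟨y j i, hymem, by rw [adj_def]; left; simp [rB, h1]⟩
    · by_cases h2 : s = j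
      · exact ⟨d j, hmem _ (by simp [inH]), by rw [adj_def]; left; simp [rB, h2]⟩
      · obtain ⟨t', ht'⟩ := Fin.exists_succAbove_eq (show s.succAbove t ≠ j from h1)
        refine ⟨hh j t', hmem _ (by simp [inH]), ?_⟩
        rw [adj_def]; left; simp [rB, ht', h2]
  | c l =>
    by_cases hl : l = j
    · exact ⟨y j i, hymem, by rw [adj_def]; left; simp [rB, hl]⟩
    · exact ⟨x j, hmem _ (by simp [inH]), by rw [adj_def]; left; simp [rB, hl]⟩
  | d l =>
    by_cases hl : l = j
    · exact ⟨hh j ⟨0, hk⟩, hmem _ (by simp [inH]), by rw [adj_def]; right; simp [rB, hl]⟩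
    · exact ⟨d j, hmem _ (by simp [inH]), by rw [adj_def]; left; simp [rB, hl]⟩

lemma disj_Hcl_y {k : ℕ} (j l : Fin (k+1)) (i : Fin k) :
    Disjoint (Hcl k j) ({y l i} : Finset (Vx k)) := by
  rw [Finset.disjoint_singleton_right, mem_Hcl]
  simp [inH]

lemma Hcl_inj {k : ℕ} : Function.Injective (Hcl k) := by
  intro a b h
  have hx : (x a : Vx k) ∈ Hcl k a := mem_Hcl.2 (by simp [inH])
  rw [h, mem_Hcl] at hx
  simpa [inH] using hx

lemma ysing_inj {k : ℕ} :
    Function.Injective (fun p : Fin (k+1) × Fin k => ({y p.1 p.2} : Finset (Vx k))) := by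
  intro p q h
  have h2 : (y p.1 p.2 : Vx k) = y q.1 q.2 := Finset.singleton_injective h
  injection h2 with h3 h4
  exact Prod.ext h3 h4

lemma card_Psi {k : ℕ} : (Psi k).card = (k+1) * (k+1) := by
  rw [Psi, Finset.card_union_of_disjoint]
  · rw [Finset.card_image_of_injective _ Hcl_inj,
      Finset.card_image_of_injective _ ysing_inj]
    simp
    ring
  · rw [Finset.disjoint_left]
    rintro C hC hC'
    simp only [Finset.mem_image, Finset.mem_univ, true_and] at hC hC'
    obtain ⟨j, rfl⟩ := hC
    obtain ⟨p, hp⟩ := hC'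
    have hx : (x j : Vx k) ∈ Hcl k j := mem_Hcl.2 (by simp [inH])
    rw [← hp] at hx
    simp at hx

lemma part {k : ℕ} (v : Vx k) : ∃! C, C ∈ Psi k ∧ v ∈ C := by
  have hHy : ∀ (j : Fin (k+1)) (p : Fin (k+1) × Fin k) (a : Vx k),
      a ∈ Hcl k j → a ∈ ({y p.1 p.2} : Finset (Vx k)) → False := by
    intro j p a h1 h2
    rw [Finset.mem_singleton] at h2
    subst h2
    rw [mem_Hcl] at h1
    simp [inH] at h1
  cases v with
  | x j =>
    refine ⟨Hcl k j, ⟨mem_Psi.2 (Or.inl ⟨j, rfl⟩), mem_Hcl.2 (by simp [inH])⟩, ?_⟩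
    rintro C ⟨hC, hv⟩
    rcases mem_Psi.1 hC with ⟨j', rfl⟩ | ⟨p, rfl⟩
    · rw [mem_Hcl] at hv; simp [inH] at hv; rw [hv]
    · exact absurd hv (by simp)
  | hh s t =>
    refine ⟨Hcl k s, ⟨mem_Psi.2 (Or.inl ⟨s, rfl⟩), mem_Hcl.2 (by simp [inH])⟩, ?_⟩
    rintro C ⟨hC, hv⟩
    rcases mem_Psi.1 hC with ⟨j', rfl⟩ | ⟨p, rfl⟩
    · rw [mem_Hcl] at hv; simp [inH] at hv; rw [hv]
    · exact absurd hv (by simp)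
  | c j =>
    refine ⟨Hcl k j, ⟨mem_Psi.2 (Or.inl ⟨j, rfl⟩), mem_Hcl.2 (by simp [inH])⟩, ?_⟩
    rintro C ⟨hC, hv⟩
    rcases mem_Psi.1 hC with ⟨j', rfl⟩ | ⟨p, rfl⟩
    · rw [mem_Hcl] at hv; simp [inH] at hv; rw [hv]
    · exact absurd hv (by simp)
  | d j =>
    refine ⟨Hcl k j, ⟨mem_Psi.2 (Or.inl ⟨j, rfl⟩), mem_Hcl.2 (by simp [inH])⟩, ?_⟩
    rintro C ⟨hC, hv⟩
    rcases mem_Psi.1 hC with ⟨j', rfl⟩ | ⟨p, rfl⟩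
    · rw [mem_Hcl] at hv; simp [inH] at hv; rw [hv]
    · exact absurd hv (by simp)
  | y j i =>
    refine ⟨{y j i}, ⟨mem_Psi.2 (Or.inr ⟨(j, i), rfl⟩), Finset.mem_singleton_self _⟩, ?_⟩
    rintro C ⟨hC, hv⟩
    rcases mem_Psi.1 hC with ⟨j', rfl⟩ | ⟨p, rfl⟩
    · rw [mem_Hcl] at hv; simp [inH] at hv
    · rw [Finset.mem_singleton] at hv
      rw [hv]

lemma tc_Gk {k : ℕ} (hk : 0 < k) : IsTCPartition (Gk k) (Psi k) := by
  refine ⟨?_, part, ?_, ?_⟩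
  · intro C hC
    rcases mem_Psi.1 hC with ⟨j, rfl⟩ | ⟨p, rfl⟩
    · exact ⟨x j, mem_Hcl.2 (by simp [inH])⟩
    · exact ⟨y p.1 p.2, Finset.mem_singleton_self _⟩
  · intro C hC
    rcases mem_Psi.1 hC with ⟨j, rfl⟩ | ⟨p, rfl⟩
    · exact notTDS_Hcl j
    · exact notTDS_y p.1 p.2
  · intro C hC
    rcases mem_Psi.1 hC with ⟨j, rfl⟩ | ⟨p, rfl⟩
    · refine ⟨{y j ⟨0, hk⟩}, mem_Psi.2 (Or.inr ⟨(j, ⟨0, hk⟩), rfl⟩), ?_, ?_⟩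
      · intro h
        have := h ▸ Finset.mem_singleton_self (y j ⟨0, hk⟩ : Vx k)
        rw [mem_Hcl] at this
        simp [inH] at this
      · exact ⟨disj_Hcl_y j j _, notTDS_Hcl j, notTDS_y j _, TDS_union hk j _⟩
    · refine ⟨Hcl k p.1, mem_Psi.2 (Or.inl ⟨p.1, rfl⟩), ?_, ?_⟩
      · intro h
        have := h ▸ (mem_Hcl.2 (by simp [inH]) : (x p.1 : Vx k) ∈ Hcl k p.1)
        simp at this
      · exact ⟨(disj_Hcl_y p.1 p.1 p.2).symm, notTDS_y p.1 p.2, notTDS_Hcl p.1,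
          by rw [Finset.union_comm]; exact TDS_union hk p.1 p.2⟩

lemma isolateFree_Gk {k : ℕ} (hk : 0 < k) : IsolateFree (Gk k) := by
  intro v
  obtain ⟨u, _, hadj⟩ := TDS_union hk 0 ⟨0, hk⟩ v
  exact ⟨u, hadj⟩

lemma x_inj {k : ℕ} : Function.Injective (x : Fin (k+1) → Vx k) := by
  intro a b h; injection h

lemma nbhd_c {k : ℕ} (j : Fin (k+1)) :
    (Gk k).neighborFinset (c j) =
      ((Finset.univ.erase j).image x) ∪ (Finset.univ.image fun i => y j i) := by
  ext b
  rw [SimpleGraph.mem_neighborFinset, adj_def]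
  cases b <;> simp [rB] <;> tauto

lemma deg_c {k : ℕ} (j : Fin (k+1)) : (Gk k).degree (c j) = 2 * k := by
  show ((Gk k).neighborFinset (c j)).card = 2 * k
  rw [nbhd_c]
  rw [Finset.card_union_of_disjoint (by simp [Finset.disjoint_left])]
  rw [Finset.card_image_of_injective _ x_inj,
    Finset.card_image_of_injective _ (fun a b h => by injection h)]
  simp [Finset.card_erase_of_mem]
  omega

lemma deg_le_x {k : ℕ} (j : Fin (k+1)) : (Gk k).degree (x j) ≤ 2 * k := by
  show ((Gk k).neighborFinset (x j)).card ≤ 2 * k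
  have hsub : (Gk k).neighborFinset (x j) ⊆
      (Finset.univ.image fun i => y j i) ∪ ((Finset.univ.erase j).image c) := by
    intro b hb
    rw [SimpleGraph.mem_neighborFinset, adj_def] at hb
    cases b <;> simp [rB] at hb ⊢ <;> tauto
  calc ((Gk k).neighborFinset (x j)).card ≤ _ := Finset.card_le_card hsub
    _ ≤ (Finset.univ.image fun i : Fin k => y j i).card +
        ((Finset.univ.erase j).image c).card := Finset.card_union_le _ _
    _ ≤ k + k := by
        gcongr
        · exact (Finset.card_image_le).trans (by simp)
        · exact (Finset.card_image_le).trans (by simp [Finset.card_erase_of_mem])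
    _ ≤ 2 * k := by omega

lemma deg_le_d {k : ℕ} (j : Fin (k+1)) : (Gk k).degree (d j) ≤ 2 * k := by
  show ((Gk k).neighborFinset (d j)).card ≤ 2 * k
  have hsub : (Gk k).neighborFinset (d j) ⊆
      (Finset.univ.image fun t => hh j t) ∪ ((Finset.univ.erase j).image d) := by
    intro b hb
    rw [SimpleGraph.mem_neighborFinset, adj_def] at hb
    cases b <;> simp [rB] at hb ⊢ <;> tauto
  calc ((Gk k).neighborFinset (d j)).card ≤ _ := Finset.card_le_card hsub
    _ ≤ (Finset.univ.image fun t : Fin k => hh j t).card +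
        ((Finset.univ.erase j).image d).card := Finset.card_union_le _ _
    _ ≤ k + k := by
        gcongr
        · exact (Finset.card_image_le).trans (by simp)
        · exact (Finset.card_image_le).trans (by simp [Finset.card_erase_of_mem])
    _ ≤ 2 * k := by omega

lemma deg_le_c {k : ℕ} (j : Fin (k+1)) : (Gk k).degree (c j) ≤ 2 * k := by
  rw [deg_c]

lemma deg_le_y {k : ℕ} (hk : 2 ≤ k) (l : Fin (k+1)) (i : Fin k) :
    (Gk k).degree (y l i) ≤ 2 * k := by
  show ((Gk k).neighborFinset (y l i)).card ≤ 2 * k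
  have hsub : (Gk k).neighborFinset (y l i) ⊆
      ({x l, c l} : Finset (Vx k)) ∪
        ((Finset.univ.filter fun p : Fin (k+1) × Fin k => p.1.succAbove p.2 = l).image
          fun p => hh p.1 p.2) := by
    intro b hb
    rw [SimpleGraph.mem_neighborFinset, adj_def] at hb
    cases b <;> simp [rB] at hb ⊢ <;> aesop
  have hfil : ((Finset.univ.filter fun p : Fin (k+1) × Fin k => p.1.succAbove p.2 = l)).card
      ≤ (Finset.univ.erase l : Finset (Fin (k+1))).card := by
    apply Finset.card_le_card_of_injOn Prod.fst
    · intro p hp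
      simp only [Finset.mem_coe, Finset.mem_filter] at hp
      simp only [Finset.mem_coe, Finset.mem_erase, Finset.mem_univ, and_true]
      rw [← hp.2]; exact Fin.ne_succAbove _ _
    · intro p hp q hq hpq
      simp only [Finset.mem_coe, Finset.mem_filter] at hp hq
      have h2 : p.1.succAbove p.2 = p.1.succAbove q.2 := by
        rw [hp.2, hpq, hq.2]
      exact Prod.ext hpq (Fin.succAbove_right_injective h2)
  have hcard : (Finset.univ.erase l : Finset (Fin (k+1))).card = k := by
    simp [Finset.card_erase_of_mem]
  calc ((Gk k).neighborFinset (y l i)).card ≤ _ := Finset.card_le_card hsub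
    _ ≤ ({x l, c l} : Finset (Vx k)).card + _ := Finset.card_union_le _ _
    _ ≤ 2 + k := by
        gcongr
        · exact (Finset.card_insert_le _ _).trans (by simp)
        · exact Finset.card_image_le.trans (hfil.trans (le_of_eq hcard))
    _ ≤ 2 * k := by omega

lemma deg_le_hh {k : ℕ} (hk : 2 ≤ k) (s : Fin (k+1)) (t : Fin k) :
    (Gk k).degree (hh s t) ≤ 2 * k := by
  show ((Gk k).neighborFinset (hh s t)).card ≤ 2 * k
  have hsub : (Gk k).neighborFinset (hh s t) ⊆
      ((Finset.univ.image fun i => y (s.succAbove t) i) ∪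
        ((Finset.univ.filter fun p : Fin (k+1) × Fin k =>
            p.1.succAbove p.2 = s.succAbove t ∧ p.1 ≠ s).image fun p => hh p.1 p.2)) ∪
        ({d s} : Finset (Vx k)) := by
    intro b hb
    rw [SimpleGraph.mem_neighborFinset, adj_def] at hb
    cases b <;> simp [rB] at hb ⊢ <;> aesop
  have hfil : ((Finset.univ.filter fun p : Fin (k+1) × Fin k =>
      p.1.succAbove p.2 = s.succAbove t ∧ p.1 ≠ s)).card ≤
      (((Finset.univ.erase s).erase (s.succAbove t)) : Finset (Fin (k+1))).card := by
    apply Finset.card_le_card_of_injOn Prod.fst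
    · intro p hp
      simp only [Finset.mem_coe, Finset.mem_filter] at hp
      simp only [Finset.mem_coe, Finset.mem_erase, Finset.mem_univ, and_true]
      refine ⟨?_, hp.2.2⟩
      rw [← hp.2.1]; exact Fin.ne_succAbove _ _
    · intro p hp q hq hpq
      simp only [Finset.mem_coe, Finset.mem_filter] at hp hq
      have h2 : p.1.succAbove p.2 = p.1.succAbove q.2 := by
        rw [hp.2.1, hpq, hq.2.1]
      exact Prod.ext hpq (Fin.succAbove_right_injective h2)
  have hcard : (((Finset.univ.erase s).erase (s.succAbove t)) : Finset (Fin (k+1))).card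
      = k - 1 := by
    rw [Finset.card_erase_of_mem (by simp [Fin.succAbove_ne]),
      Finset.card_erase_of_mem (by simp)]
    simp
  calc ((Gk k).neighborFinset (hh s t)).card ≤ _ := Finset.card_le_card hsub
    _ ≤ _ + ({d s} : Finset (Vx k)).card := Finset.card_union_le _ _
    _ ≤ (k + (k - 1)) + 1 := by
        gcongr
        · refine (Finset.card_union_le _ _).trans ?_
          gcongr
          · exact Finset.card_image_le.trans (by simp)
          · exact Finset.card_image_le.trans (hfil.trans (le_of_eq hcard))
        · simp
    _ ≤ 2 * k := by omega

lemma deg_le {k : ℕ} (hk : 2 ≤ k) (v : Vx k) : (Gk k).degree v ≤ 2 * k := by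
  cases v with
  | x j => exact deg_le_x j
  | y l i => exact deg_le_y hk l i
  | hh s t => exact deg_le_hh hk s t
  | c j => exact deg_le_c j
  | d j => exact deg_le_d j


end Vx

section Transfer

instance decComap {W W' : Type*} (G : SimpleGraph W) [h : DecidableRel G.Adj] (f : W' → W) :
    DecidableRel ((G.comap f).Adj) := fun a b => h _ _

variable {W : Type*} [Fintype W] [DecidableEq W] {n : ℕ}

lemma comap_degree (G : SimpleGraph W) [DecidableRel G.Adj] (e : W ≃ Fin n) (v : Fin n) :
    (G.comap ⇑e.symm).degree v = G.degree (e.symm v) := by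
  have hN : (G.comap ⇑e.symm).neighborFinset v = (G.neighborFinset (e.symm v)).image ⇑e := by
    ext u
    simp only [SimpleGraph.mem_neighborFinset, SimpleGraph.comap_adj, Finset.mem_image]
    constructor
    · intro h'
      exact ⟨e.symm u, h', by simp⟩
    · rintro ⟨w, hw, rfl⟩
      simpa using hw
  show ((G.comap ⇑e.symm).neighborFinset v).card = _
  rw [hN, Finset.card_image_of_injective _ e.injective]
  rfl

lemma comap_TDS (G : SimpleGraph W) (e : W ≃ Fin n) (S : Finset W) :
    TotalDomSet (G.comap ⇑e.symm) (S.image ⇑e) ↔ TotalDomSet G S := by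
  constructor
  · intro h v
    obtain ⟨u, hu, ha⟩ := h (e v)
    rw [Finset.mem_image] at hu
    obtain ⟨w, hw, rfl⟩ := hu
    refine ⟨w, hw, ?_⟩
    simpa using ha
  · intro h v
    obtain ⟨w, hw, ha⟩ := h (e.symm v)
    exact ⟨e w, Finset.mem_image_of_mem _ hw, by simpa using ha⟩

lemma comap_TCpart (G : SimpleGraph W) (e : W ≃ Fin n) (Ψ : Finset (Finset W))
    (h : IsTCPartition G Ψ) :
    IsTCPartition (G.comap ⇑e.symm) (Ψ.image (Finset.image ⇑e)) := by
  obtain ⟨h1, h2, h3, h4⟩ := h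
  have himg : ∀ (S : Finset W) (v : Fin n), v ∈ S.image ⇑e ↔ e.symm v ∈ S := by
    intro S v
    rw [Finset.mem_image]
    constructor
    · rintro ⟨w, hw, rfl⟩; simpa using hw
    · intro hv; exact ⟨e.symm v, hv, by simp⟩
  refine ⟨?_, ?_, ?_, ?_⟩
  · intro C hC
    rw [Finset.mem_image] at hC
    obtain ⟨D, hD, rfl⟩ := hC
    exact (h1 D hD).image _
  · intro v
    obtain ⟨C, ⟨hC, hv⟩, huniq⟩ := h2 (e.symm v)
    refine ⟨C.image ⇑e, ⟨Finset.mem_image_of_mem _ hC, (himg C v).2 hv⟩, ?_⟩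
    rintro C' ⟨hC', hv'⟩
    rw [Finset.mem_image] at hC'
    obtain ⟨D, hD, rfl⟩ := hC'
    rw [himg] at hv'
    rw [huniq D ⟨hD, hv'⟩]
  · intro C hC
    rw [Finset.mem_image] at hC
    obtain ⟨D, hD, rfl⟩ := hC
    rw [comap_TDS]
    exact h3 D hD
  · intro C hC
    rw [Finset.mem_image] at hC
    obtain ⟨D, hD, rfl⟩ := hC
    obtain ⟨D', hD', hne, hdisj, hA, hB, hU⟩ := h4 D hD
    refine ⟨D'.image ⇑e, Finset.mem_image_of_mem _ hD', ?_, ?_, ?_, ?_, ?_⟩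
    · intro hEq
      exact hne (Finset.image_injective e.injective hEq)
    · exact (Finset.disjoint_image e.injective).2 hdisj
    · rw [comap_TDS]; exact hA
    · rw [comap_TDS]; exact hB
    · rw [← Finset.image_union, comap_TDS]; exact hU

end Transfer


/-- For every even `Δ ≥ 4` there is a finite isolate-free graph `G` with maximum degree
`Δ` admitting a total coalition partition with at least `Δ²/4 + Δ + 1` classes. -/
theorem statement_6 (Δ : ℕ) (hΔ : 4 ≤ Δ) (heven : Even Δ) :
    ∃ (n : ℕ) (G : SimpleGraph (Fin n)) (_ : DecidableRel G.Adj)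
      (Ψ : Finset (Finset (Fin n))),
      IsolateFree G ∧ G.maxDegree = Δ ∧ IsTCPartition G Ψ ∧
      Δ ^ 2 / 4 + Δ + 1 ≤ Ψ.card := by
  obtain ⟨k, hkΔ⟩ := heven
  have hk2 : 2 ≤ k := by omega
  have hk0 : 0 < k := by omega
  let e := Fintype.equivFin (Vx k)
  refine ⟨Fintype.card (Vx k), (Vx.Gk k).comap ⇑e.symm, inferInstance,
    (Vx.Psi k).image (Finset.image ⇑e), ?_, ?_, ?_, ?_⟩
  · intro v
    obtain ⟨u, hu⟩ := Vx.isolateFree_Gk hk0 (e.symm v)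
    exact ⟨e u, by simpa using hu⟩
  · have h1 : ∀ v, ((Vx.Gk k).comap ⇑e.symm).degree v ≤ 2 * k := by
      intro v; rw [comap_degree]; exact Vx.deg_le hk2 _
    have h2 : ((Vx.Gk k).comap ⇑e.symm).degree (e (Vx.c 0)) = 2 * k := by
      rw [comap_degree, Equiv.symm_apply_apply]; exact Vx.deg_c 0
    have h3 := le_antisymm
      (((Vx.Gk k).comap ⇑e.symm).maxDegree_le_of_forall_degree_le (2 * k) h1)
      (h2 ▸ ((Vx.Gk k).comap ⇑e.symm).degree_le_maxDegree (e (Vx.c 0)))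
    rw [h3]; omega
  · exact comap_TCpart _ e _ (Vx.tc_Gk hk0)
  · rw [Finset.card_image_of_injective _ (Finset.image_injective e.injective), Vx.card_Psi]
    have h4 : Δ ^ 2 / 4 = k * k := by
      have h : Δ ^ 2 = 4 * (k * k) := by subst hkΔ; ring
      rw [h]; omega
    have h5 : (k + 1) * (k + 1) = k * k + (k + k) + 1 := by ring
    omega
end

section
/- Let G be a finite simple isolate-free graph with minimum degree δ = δ(G) and maximum degree Δ = Δ(G). If δ < ⌊(Δ+2)/2⌋, then every total coalition partition of G has at most δ(Δ − δ + 2) classes; i.e., TC(G) ≤ δ(G)(Δ(G) − δ(G) + 2). -/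
open scoped Classical

variable {V : Type*}

/-- If `δ(G) < ⌊(Δ(G)+2)/2⌋`, then every total coalition partition of the isolate-free
graph `G` has at most `δ(G)(Δ(G) − δ(G) + 2)` classes. -/
theorem statement_12 [Fintype V] [DecidableEq V]
    (G : SimpleGraph V) [DecidableRel G.Adj] (hG : IsolateFree G)
    (hδ : G.minDegree < (G.maxDegree + 2) / 2)
    (Ψ : Finset (Finset V)) (hΨ : IsTCPartition G Ψ) :
    Ψ.card ≤ G.minDegree * (G.maxDegree - G.minDegree + 2) := by
  classical
  obtain ⟨hne, huniq, hnd, hpart⟩ := hΨ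
  rcases Finset.eq_empty_or_nonempty Ψ with hΨe | hΨne
  · simp [hΨe]
  obtain ⟨C0, hC0⟩ := hΨne
  obtain ⟨x0, hx0⟩ := hne C0 hC0
  haveI : Nonempty V := ⟨x0⟩
  obtain ⟨v, hv⟩ := G.exists_minimal_degree_vertex
  have h2δ : 2 * G.minDegree ≤ G.maxDegree := by omega
  set Nv := G.neighborFinset v with hNvdef
  have hNvcard : Nv.card = G.minDegree := by
    rw [hNvdef, G.card_neighborFinset_eq_degree]; exact hv.symm
  -- pairwise disjointness of classes
  have hdisj : ∀ C ∈ Ψ, ∀ D ∈ Ψ, C ≠ D → ∀ x, x ∈ C → x ∉ D := by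
    intro C hC D hD hCD x hxC hxD
    obtain ⟨E, -, hEu⟩ := huniq x
    exact hCD ((hEu C ⟨hC, hxC⟩).trans (hEu D ⟨hD, hxD⟩).symm)
  set M := Ψ.filter (fun C => (C ∩ Nv).Nonempty) with hMdef
  set F := Ψ \ M with hFdef
  have hMsub : M ⊆ Ψ := Finset.filter_subset _ _
  have hFmem : ∀ C ∈ F, C ∈ Ψ ∧ C ∩ Nv = ∅ := by
    intro C hC
    obtain ⟨h1, h2⟩ := Finset.mem_sdiff.mp hC
    refine ⟨h1, ?_⟩
    by_contra h3
    exact h2 (Finset.mem_filter.mpr ⟨h1, Finset.nonempty_iff_ne_empty.mpr h3⟩)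
  have hcardΨ : Ψ.card = M.card + F.card := by
    have h1 : F.card = Ψ.card - M.card := by rw [hFdef]; exact Finset.card_sdiff_of_subset hMsub
    have h2 := Finset.card_le_card hMsub
    omega
  -- M.card ≤ δ
  have h3 : ∀ X ∈ M, ∃ x, x ∈ X ∩ Nv := by
    intro X hX
    exact (Finset.mem_filter.mp hX).2
  choose! rep hrep using h3
  have hMcard : M.card ≤ G.minDegree := by
    rw [← hNvcard]
    apply Finset.card_le_card_of_injOn rep
    · intro X hX; exact (Finset.mem_inter.mp (hrep X hX)).2
    · intro X hX Y hY hXY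
      by_contra hne'
      exact hdisj X (hMsub (Finset.mem_coe.mp hX)) Y (hMsub (Finset.mem_coe.mp hY)) hne'
        (rep X) (Finset.mem_inter.mp (hrep X (Finset.mem_coe.mp hX))).1
        (hXY ▸ (Finset.mem_inter.mp (hrep Y (Finset.mem_coe.mp hY))).1)
  -- partner function
  have h1 : ∀ C ∈ Ψ, ∃ D, D ∈ Ψ ∧ TotalDomSet G (C ∪ D) := by
    intro C hC
    obtain ⟨D, hD, -, -, -, -, hU⟩ := hpart C hC
    exact ⟨D, hD, hU⟩
  choose! f hf1 hf2 using h1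
  have hf3 : ∀ C ∈ F, (f C ∩ Nv).Nonempty := by
    intro C hC
    obtain ⟨hCΨ, hCNv⟩ := hFmem C hC
    obtain ⟨u, hu, hadj⟩ := hf2 C hCΨ v
    have huNv : u ∈ Nv := by rw [hNvdef]; exact (G.mem_neighborFinset v u).mpr hadj
    rcases Finset.mem_union.mp hu with h | h
    · have : u ∈ C ∩ Nv := Finset.mem_inter.mpr ⟨h, huNv⟩
      rw [hCNv] at this
      exact absurd this (Finset.notMem_empty u)
    · exact ⟨u, Finset.mem_inter.mpr ⟨h, huNv⟩⟩
  set M' := F.image f with hM'def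
  have hM'sub : M' ⊆ M := by
    intro X hX
    obtain ⟨C, hC, rfl⟩ := Finset.mem_image.mp hX
    exact Finset.mem_filter.mpr ⟨hf1 C (hFmem C hC).1, hf3 C hC⟩
  -- for each class, a vertex it fails to dominate
  have h2 : ∀ X ∈ Ψ, ∃ z : V, ∀ u ∈ X, ¬ G.Adj z u := by
    intro X hX
    have hX' := hnd X hX
    rw [TotalDomSet] at hX'
    push_neg at hX'
    exact hX'
  choose! zf hzf using h2
  set S : V → Finset (Finset V) := fun a => M'.filter (fun X => ∀ u ∈ X, ¬ G.Adj a u)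
    with hSdef
  set T := M'.image zf with hTdef
  set covers := T.powerset.filter (fun A => ∀ X ∈ M', ∃ a ∈ A, X ∈ S a) with hcovdef
  have hTcov : T ∈ covers := by
    refine Finset.mem_filter.mpr ⟨Finset.mem_powerset.mpr (le_refl _), ?_⟩
    intro X hX
    refine ⟨zf X, Finset.mem_image_of_mem zf hX, ?_⟩
    exact Finset.mem_filter.mpr ⟨hX, hzf X (hMsub (hM'sub hX))⟩
  obtain ⟨A, hAcov, hAmin⟩ := Finset.exists_min_image covers Finset.card ⟨T, hTcov⟩
  have hAsub : A ⊆ T := Finset.mem_powerset.mp (Finset.mem_filter.mp hAcov).1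
  have hAcov' : ∀ X ∈ M', ∃ a ∈ A, X ∈ S a := (Finset.mem_filter.mp hAcov).2
  set r := A.card with hrdef
  have hrδ : r ≤ G.minDegree := by
    calc r ≤ T.card := Finset.card_le_card hAsub
    _ ≤ M'.card := Finset.card_image_le
    _ ≤ M.card := Finset.card_le_card hM'sub
    _ ≤ G.minDegree := hMcard
  -- private elements for a minimum cover
  have h5 : ∀ b ∈ A, ∃ X, X ∈ M' ∧ X ∈ S b ∧ ∀ c ∈ A, c ≠ b → X ∉ S c := by
    intro b hb
    by_contra hcon
    push_neg at hcon
    have hcov2 : A.erase b ∈ covers := by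
      refine Finset.mem_filter.mpr
        ⟨Finset.mem_powerset.mpr ((Finset.erase_subset _ _).trans hAsub), ?_⟩
      intro X hX
      obtain ⟨c, hc, hXc⟩ := hAcov' X hX
      by_cases hcb : c = b
      · subst hcb
        obtain ⟨d, hd, hdc, hXd⟩ := hcon X hX hXc
        exact ⟨d, Finset.mem_erase.mpr ⟨hdc, hd⟩, hXd⟩
      · exact ⟨c, Finset.mem_erase.mpr ⟨hcb, hc⟩, hXc⟩
    have h6 := hAmin _ hcov2
    have h7 : (A.erase b).card < A.card := Finset.card_erase_lt_of_mem hb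
    omega
  choose! priv hpriv1 hpriv2 hpriv3 using h5
  -- key per-cover-vertex bound
  have hkey : ∀ a ∈ A, (F.filter (fun C => f C ∈ S a)).card + (r - 1) ≤ G.maxDegree := by
    intro a ha
    set Fa := F.filter (fun C => f C ∈ S a) with hFadef
    set Ka := M' \ S a with hKadef
    have hKa : r - 1 ≤ Ka.card := by
      have herase : (A.erase a).card ≤ Ka.card := by
        apply Finset.card_le_card_of_injOn priv
        · intro b hb
          obtain ⟨hb1, hb2⟩ := Finset.mem_erase.mp hb
          refine Finset.mem_sdiff.mpr ⟨hpriv1 b hb2, ?_⟩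
          exact hpriv3 b hb2 a ha (Ne.symm hb1)
        · intro b hb c hc hbc
          by_contra hne'
          have h8 := hpriv2 b (Finset.mem_erase.mp (Finset.mem_coe.mp hb)).2
          have h9 := hpriv3 c (Finset.mem_erase.mp (Finset.mem_coe.mp hc)).2 b
            (Finset.mem_erase.mp (Finset.mem_coe.mp hb)).2 hne'
          rw [hbc] at h8
          exact h9 h8
      have h7 : (A.erase a).card = r - 1 := Finset.card_erase_of_mem ha
      omega
    have hmeet : ∀ B ∈ Fa ∪ Ka, ∃ x, x ∈ B ∩ G.neighborFinset a := by
      intro B hB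
      rcases Finset.mem_union.mp hB with h | h
      · obtain ⟨hBF, hBS⟩ := Finset.mem_filter.mp h
        have hBΨ := (hFmem B hBF).1
        obtain ⟨u, hu, hadj⟩ := hf2 B hBΨ a
        rcases Finset.mem_union.mp hu with h' | h'
        · exact ⟨u, Finset.mem_inter.mpr ⟨h', (G.mem_neighborFinset a u).mpr hadj⟩⟩
        · exact absurd hadj ((Finset.mem_filter.mp hBS).2 u h')
      · obtain ⟨hBM', hBnS⟩ := Finset.mem_sdiff.mp h
        have hnot : ¬ (∀ u ∈ B, ¬ G.Adj a u) := by
          intro hforall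
          exact hBnS (Finset.mem_filter.mpr ⟨hBM', hforall⟩)
        push_neg at hnot
        obtain ⟨u, hu, hadj⟩ := hnot
        exact ⟨u, Finset.mem_inter.mpr ⟨hu, (G.mem_neighborFinset a u).mpr hadj⟩⟩
    choose! g hg using hmeet
    have hsubΨ : ∀ B ∈ Fa ∪ Ka, B ∈ Ψ := by
      intro B hB
      rcases Finset.mem_union.mp hB with h | h
      · exact (hFmem B (Finset.mem_filter.mp h).1).1
      · exact hMsub (hM'sub (Finset.mem_sdiff.mp h).1)
    have hdisjFK : Disjoint Fa Ka := by
      rw [Finset.disjoint_left]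
      intro B hBF hBK
      have h1' := (hFmem B (Finset.mem_filter.mp hBF).1).2
      have h2' := (Finset.mem_filter.mp (hM'sub (Finset.mem_sdiff.mp hBK).1)).2
      rw [h1'] at h2'
      exact Finset.not_nonempty_empty h2'
    have hcardunion : (Fa ∪ Ka).card = Fa.card + Ka.card :=
      Finset.card_union_of_disjoint hdisjFK
    have hcount : (Fa ∪ Ka).card ≤ G.degree a := by
      rw [← G.card_neighborFinset_eq_degree]
      apply Finset.card_le_card_of_injOn g
      · intro B hB; exact (Finset.mem_inter.mp (hg B hB)).2
      · intro B hB C hC hBC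
        by_contra hne'
        exact hdisj B (hsubΨ B (Finset.mem_coe.mp hB)) C (hsubΨ C (Finset.mem_coe.mp hC))
          hne' (g B) (Finset.mem_inter.mp (hg B (Finset.mem_coe.mp hB))).1
          (hBC ▸ (Finset.mem_inter.mp (hg C (Finset.mem_coe.mp hC))).1)
    have hdeg := G.degree_le_maxDegree a
    omega
  -- sum up
  have hFsub : F ⊆ A.biUnion (fun a => F.filter (fun C => f C ∈ S a)) := by
    intro C hC
    have hfC : f C ∈ M' := Finset.mem_image_of_mem f hC
    obtain ⟨a, ha, hfa⟩ := hAcov' _ hfC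
    exact Finset.mem_biUnion.mpr ⟨a, ha, Finset.mem_filter.mpr ⟨hC, hfa⟩⟩
  have hFcard : F.card ≤ r * (G.maxDegree - (r - 1)) := by
    calc F.card ≤ (A.biUnion (fun a => F.filter (fun C => f C ∈ S a))).card :=
          Finset.card_le_card hFsub
    _ ≤ ∑ a ∈ A, (F.filter (fun C => f C ∈ S a)).card := Finset.card_biUnion_le
    _ ≤ ∑ _a ∈ A, (G.maxDegree - (r - 1)) :=
          Finset.sum_le_sum (fun a ha => by have := hkey a ha; omega)
    _ = r * (G.maxDegree - (r - 1)) := by rw [Finset.sum_const, smul_eq_mul]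
  -- final arithmetic
  rw [hcardΨ]
  rcases Nat.eq_zero_or_pos r with hr0 | hrpos
  · rw [hr0] at hFcard
    simp only [Nat.zero_mul] at hFcard
    have h9 : G.minDegree * 1 ≤ G.minDegree * (G.maxDegree - G.minDegree + 2) :=
      Nat.mul_le_mul_left _ (by omega)
    omega
  · obtain ⟨d, hd⟩ := Nat.exists_eq_add_of_le hrδ
    obtain ⟨s, hs⟩ := Nat.exists_eq_add_of_le h2δ
    have e1 : G.maxDegree - (r - 1) = r + 2*d + s + 1 := by omega
    have e2 : G.maxDegree - G.minDegree + 2 = r + d + s + 2 := by omega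
    rw [e1] at hFcard
    rw [e2, hd]
    nlinarith [hFcard, hMcard, hd]
end

section
/- Let G be a finite simple isolate-free graph whose maximum degree Δ = Δ(G) is odd with Δ ≥ 5, and suppose TC(G) = ⌊Δ²/4 + Δ + 1⌋ = (Δ+1)(Δ+3)/4. Then for any two total coalition partitions Ψ and Ψ' of G, each having TC(G) classes and such that the maximum matching sizes of the total coalition graphs TCG(G,Ψ) and TCG(G,Ψ') are equal, the total coalition graphs TCG(G,Ψ) and TCG(G,Ψ') are isomorphic as graphs. -/
open scoped Classical
set_option maxHeartbeats 1000000
set_option linter.unusedSectionVars false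
set_option linter.unusedVariables false

variable {V : Type*}

/-- The total coalition number `TC(G)`: the maximum number of classes in a total
coalition partition of `G`. -/
noncomputable def TCnum [DecidableEq V] (G : SimpleGraph V) : ℕ :=
  sSup {k | ∃ Ψ : Finset (Finset V), IsTCPartition G Ψ ∧ Ψ.card = k}

/-- The total coalition graph `TCG(G,Ψ)` has a matching of size `m`: there are `2m`
pairwise distinct classes `A i`, `B i` of `Ψ` such that `A i` and `B i` form a total
coalition for each `i`. -/
def HasMatchingOfSize [DecidableEq V] (G : SimpleGraph V) (Ψ : Finset (Finset V))
    (m : ℕ) : Prop :=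
  ∃ A B : Fin m → Finset V,
    (∀ i, A i ∈ Ψ) ∧ (∀ i, B i ∈ Ψ) ∧
    Function.Injective (Sum.elim A B) ∧
    ∀ i, TotalCoalition G (A i) (B i)

/-- The maximum size of a matching in the total coalition graph `TCG(G,Ψ)`. -/
noncomputable def matchNum [DecidableEq V] (G : SimpleGraph V)
    (Ψ : Finset (Finset V)) : ℕ :=
  sSup {m | HasMatchingOfSize G Ψ m}


namespace TCAux

variable [DecidableEq V] (G : SimpleGraph V)

/-- adjacency between classes -/
def coal (A B : Finset V) : Prop := A ≠ B ∧ TotalCoalition G A B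

lemma coal_symm {A B : Finset V} (h : coal G A B) : coal G B A := by
  obtain ⟨hne, hd, hA, hB, hU⟩ := h
  exact ⟨hne.symm, hd.symm, hB, hA, by rwa [Finset.union_comm]⟩

lemma coal_comm {A B : Finset V} : coal G A B ↔ coal G B A :=
  ⟨coal_symm G, coal_symm G⟩

/-- independent family of classes -/
def Indep (S : Finset (Finset V)) : Prop :=
  ∀ A ∈ S, ∀ B ∈ S, A ≠ B → ¬ coal G A B

lemma Indep.subset' {S T : Finset (Finset V)} (hT : Indep G T) (h : S ⊆ T) : Indep G S :=
  fun A hA B hB hne => hT A (h hA) B (h hB) hne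

section Partition

variable {G} {Ψ : Finset (Finset V)} (hΨ : IsTCPartition G Ψ)

include hΨ

lemma classes_disjoint {A B : Finset V} (hA : A ∈ Ψ) (hB : B ∈ Ψ) (hne : A ≠ B) :
    Disjoint A B := by
  rw [Finset.disjoint_left]
  intro x hxA hxB
  obtain ⟨C, _, hCuniq⟩ := hΨ.2.1 x
  exact hne ((hCuniq A ⟨hA, hxA⟩).trans (hCuniq B ⟨hB, hxB⟩).symm)

lemma not_coal_iff {A B : Finset V} (hA : A ∈ Ψ) (hB : B ∈ Ψ) (hne : A ≠ B) :
    ¬ coal G A B ↔ ¬ TotalDomSet G (A ∪ B) := by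
  constructor
  · intro h hU
    exact h ⟨hne, classes_disjoint hΨ hA hB hne, hΨ.2.2.1 A hA, hΨ.2.2.1 B hB, hU⟩
  · intro h hc
    exact h hc.2.2.2.2

end Partition

/-- classes having no neighbour of v -/
noncomputable def Fv (Ψ : Finset (Finset V)) (v : V) : Finset (Finset V) :=
  Ψ.filter (fun C => ∀ u ∈ C, ¬ G.Adj v u)

lemma mem_Fv {Ψ : Finset (Finset V)} {v : V} {C : Finset V} :
    C ∈ Fv G Ψ v ↔ C ∈ Ψ ∧ ∀ u ∈ C, ¬ G.Adj v u := by
  simp [Fv]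

section FvLemmas

variable [Fintype V] [DecidableRel G.Adj] {Ψ : Finset (Finset V)}

lemma Fv_subset (v : V) : Fv G Ψ v ⊆ Ψ := fun C hC => ((mem_Fv G).1 hC).1

omit [Fintype V] [DecidableRel G.Adj] in
lemma Fv_indep (hΨ : IsTCPartition G Ψ) (v : V) : Indep G (Fv G Ψ v) := by
  intro A hA B hB hne hc
  obtain ⟨u, hu, hadj⟩ := hc.2.2.2.2 v
  rcases Finset.mem_union.1 hu with h | h
  · exact (mem_Fv G |>.1 hA).2 u h hadj
  · exact (mem_Fv G |>.1 hB).2 u h hadj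

lemma card_Fv (hΨ : IsTCPartition G Ψ) (v : V) :
    Ψ.card ≤ (Fv G Ψ v).card + G.maxDegree := by
  classical
  have hcard : (Ψ \ Fv G Ψ v).card ≤ G.degree v := by
    rw [← SimpleGraph.card_neighborFinset_eq_degree]
    have hex : ∀ C ∈ Ψ \ Fv G Ψ v, ∃ u ∈ C, G.Adj v u := by
      intro C hC
      rw [Finset.mem_sdiff] at hC
      have h2 : ¬ (C ∈ Ψ ∧ ∀ u ∈ C, ¬ G.Adj v u) := fun h => hC.2 ((mem_Fv G).2 h)
      push_neg at h2
      obtain ⟨u, hu, hadj⟩ := h2 hC.1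
      exact ⟨u, hu, hadj⟩
    choose f hf1 hf2 using hex
    apply Finset.card_le_card_of_injOn (fun C => if h : C ∈ Ψ \ Fv G Ψ v then f C h else v)
    · intro C hC
      simp only [Finset.mem_coe] at hC
      simp only [hC, dif_pos]
      rw [Finset.mem_coe, SimpleGraph.mem_neighborFinset]
      exact hf2 C hC
    · intro A hA B hB hfe
      simp only [Finset.mem_coe] at hA hB
      simp only [hA, hB, dif_pos] at hfe
      by_contra hne
      have hd := classes_disjoint hΨ (Finset.mem_sdiff.1 hA).1 (Finset.mem_sdiff.1 hB).1 hne
      exact (Finset.disjoint_left.1 hd) (hf1 A hA) (hfe ▸ hf1 B hB)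
  have h3 : Ψ.card ≤ (Fv G Ψ v).card + (Ψ \ Fv G Ψ v).card := by
    rw [Finset.card_sdiff_of_subset (Fv_subset G v)]
    have := Finset.card_le_card (Fv_subset G v (Ψ := Ψ))
    omega
  have h4 := SimpleGraph.degree_le_maxDegree G v
  omega

end FvLemmas


-- ## neighbourhoods into I
noncomputable def NI (I : Finset (Finset V)) (B : Finset (Finset V)) : Finset (Finset V) :=
  I.filter (fun x => ∃ u ∈ B, coal G u x)

lemma mem_NI {I B : Finset (Finset V)} {x : Finset V} :
    x ∈ NI G I B ↔ x ∈ I ∧ ∃ u ∈ B, coal G u x := by simp [NI]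

lemma NI_subset {I B : Finset (Finset V)} : NI G I B ⊆ I := fun x hx => ((mem_NI G).1 hx).1

lemma NI_mono {I B B' : Finset (Finset V)} (h : B ⊆ B') : NI G I B ⊆ NI G I B' := by
  intro x hx
  obtain ⟨hxI, u, hu, hc⟩ := (mem_NI G).1 hx
  exact (mem_NI G).2 ⟨hxI, u, h hu, hc⟩

lemma NI_union {I B B' : Finset (Finset V)} :
    NI G I (B ∪ B') = NI G I B ∪ NI G I B' := by
  ext x
  simp only [mem_NI, Finset.mem_union]
  constructor
  · rintro ⟨hxI, u, hu | hu, hc⟩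
    · exact Or.inl ⟨hxI, u, hu, hc⟩
    · exact Or.inr ⟨hxI, u, hu, hc⟩
  · rintro (⟨hxI, u, hu, hc⟩ | ⟨hxI, u, hu, hc⟩)
    · exact ⟨hxI, u, Or.inl hu, hc⟩
    · exact ⟨hxI, u, Or.inr hu, hc⟩

section MaxInd

variable {G} {Ψ : Finset (Finset V)}

/-- a maximum independent subfamily exists -/
lemma exists_max_indep (Ψ : Finset (Finset V)) :
    ∃ I ⊆ Ψ, Indep G I ∧ ∀ S ⊆ Ψ, Indep G S → S.card ≤ I.card := by
  classical
  have hne : (Ψ.powerset.filter (fun S => Indep G S)).Nonempty := by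
    refine ⟨∅, ?_⟩
    simp only [Finset.mem_filter, Finset.mem_powerset]
    exact ⟨Finset.empty_subset _, fun A hA => absurd hA (Finset.notMem_empty A)⟩
  obtain ⟨I, hI, hImax⟩ := Finset.exists_max_image _ Finset.card hne
  simp only [Finset.mem_filter, Finset.mem_powerset] at hI
  refine ⟨I, hI.1, hI.2, fun S hS hSI => ?_⟩
  exact hImax S (by simp only [Finset.mem_filter, Finset.mem_powerset]; exact ⟨hS, hSI⟩)

/-- Hall-type bound from maximality -/
lemma hall (hIsub : I ⊆ Ψ) (hI : Indep G I)
    (hmax : ∀ S ⊆ Ψ, Indep G S → S.card ≤ I.card)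
    {D : Finset (Finset V)} (hD : D ⊆ Ψ \ I) (hDind : Indep G D) :
    D.card ≤ (NI G I D).card := by
  classical
  set S : Finset (Finset V) := D ∪ (I \ NI G I D) with hSdef
  have hDdisj : Disjoint D I := by
    rw [Finset.disjoint_left]
    intro a haD haI
    exact (Finset.mem_sdiff.1 (hD haD)).2 haI
  have hSsub : S ⊆ Ψ := by
    intro a ha
    rcases Finset.mem_union.1 ha with h | h
    · exact (Finset.mem_sdiff.1 (hD h)).1
    · exact hIsub (Finset.mem_sdiff.1 h).1
  have hSind : Indep G S := by
    intro A hA B hB hne hc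
    rcases Finset.mem_union.1 hA with hA' | hA' <;> rcases Finset.mem_union.1 hB with hB' | hB'
    · exact hDind A hA' B hB' hne hc
    · have hBI := Finset.mem_sdiff.1 hB'
      exact hBI.2 ((mem_NI G).2 ⟨hBI.1, A, hA', hc⟩)
    · have hAI := Finset.mem_sdiff.1 hA'
      exact hAI.2 ((mem_NI G).2 ⟨hAI.1, B, hB', coal_symm G hc⟩)
    · exact hI A (Finset.mem_sdiff.1 hA').1 B (Finset.mem_sdiff.1 hB').1 hne hc
  have e1 : (I \ NI G I D).card + (NI G I D).card = I.card :=
    Finset.card_sdiff_add_card_eq_card (NI_subset G)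
  have hScard : S.card = D.card + (I \ NI G I D).card := by
    rw [hSdef, Finset.card_union_of_disjoint (hDdisj.mono_right Finset.sdiff_subset)]
  have := hmax S hSsub hSind
  omega

/-- key union counting lemma -/
lemma union_bound (hIsub : I ⊆ Ψ) (hI : Indep G I)
    (hmax : ∀ S ⊆ Ψ, Indep G S → S.card ≤ I.card) (c : ℕ) :
    ∀ L : List (Finset (Finset V)),
      (∀ B ∈ L, B ⊆ Ψ \ I ∧ Indep G B ∧ (NI G I B).card ≤ B.card + c) →
      (NI G I (L.foldr (· ∪ ·) ∅)).card ≤ (L.foldr (· ∪ ·) ∅).card + L.length * c := by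
  intro L
  induction L with
  | nil =>
    intro _
    simp only [List.foldr_nil]
    have : NI G I (∅ : Finset (Finset V)) = ∅ := by
      ext x; simp [mem_NI]
    simp [this]
  | cons B L' ih =>
    intro hmem
    have hB := hmem B List.mem_cons_self
    have hL' : ∀ B' ∈ L', B' ⊆ Ψ \ I ∧ Indep G B' ∧ (NI G I B').card ≤ B'.card + c :=
      fun B' hB' => hmem B' (List.mem_cons_of_mem _ hB')
    have IH := ih hL'
    set U : Finset (Finset V) := L'.foldr (· ∪ ·) ∅ with hU
    have hfold : (B :: L').foldr (· ∪ ·) ∅ = B ∪ U := by simp [hU]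
    rw [hfold, NI_union]
    -- Hall on B ∩ U
    have hBU_sub : B ∩ U ⊆ Ψ \ I := fun x hx => hB.1 (Finset.mem_inter.1 hx).1
    have hBU_ind : Indep G (B ∩ U) := Indep.subset' G hB.2.1 Finset.inter_subset_left
    have hhall := hall hIsub hI hmax hBU_sub hBU_ind
    -- NI (B∩U) ⊆ NI B ∩ NI U
    have hsub : NI G I (B ∩ U) ⊆ NI G I B ∩ NI G I U := by
      intro x hx
      exact Finset.mem_inter.2 ⟨NI_mono G Finset.inter_subset_left hx,
        NI_mono G Finset.inter_subset_right hx⟩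
    have h1 : (B ∩ U).card ≤ (NI G I B ∩ NI G I U).card :=
      le_trans hhall (Finset.card_le_card hsub)
    have h2 := Finset.card_union_add_card_inter (NI G I B) (NI G I U)
    have h3 := Finset.card_union_add_card_inter B U
    have h4 := hB.2.2
    simp only [List.length_cons]
    have h5 : (L'.length + 1) * c = L'.length * c + c := by ring
    omega

end MaxInd



section Tight

variable {G : SimpleGraph V} [Fintype V] [DecidableRel G.Adj] {Ψ : Finset (Finset V)}
  {I : Finset (Finset V)}

/-- tight set through a non-dominating class: additive form of |NI B| ≤ |B| + c -/
lemma tight_Fv (hΨ : IsTCPartition G Ψ) (hIsub : I ⊆ Ψ) (hI : Indep G I)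
    (v : V) :
    (Fv G Ψ v \ I) ⊆ Ψ \ I ∧ Indep G (Fv G Ψ v \ I) ∧
      (NI G I (Fv G Ψ v \ I)).card + Ψ.card ≤ (Fv G Ψ v \ I).card + G.maxDegree + I.card := by
  classical
  set B : Finset (Finset V) := Fv G Ψ v \ I with hBdef
  have hBsub : B ⊆ Ψ \ I := by
    intro x hx
    rw [hBdef, Finset.mem_sdiff] at hx
    exact Finset.mem_sdiff.2 ⟨Fv_subset G v hx.1, hx.2⟩
  have hBind : Indep G B := Indep.subset' G (Fv_indep G hΨ v) Finset.sdiff_subset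
  refine ⟨hBsub, hBind, ?_⟩
  · -- Fv ∩ I and NI B are disjoint subsets of I
    have hdisj : Disjoint (Fv G Ψ v ∩ I) (NI G I B) := by
      rw [Finset.disjoint_left]
      intro x hx hxN
      obtain ⟨hxI, b, hb, hc⟩ := (mem_NI G).1 hxN
      have hbFv : b ∈ Fv G Ψ v := (Finset.mem_sdiff.1 hb).1
      have hbne : b ≠ x := by
        intro h
        exact (Finset.mem_sdiff.1 hb).2 (h ▸ (Finset.mem_inter.1 hx).2)
      exact Fv_indep G hΨ v b hbFv x (Finset.mem_inter.1 hx).1 hbne hc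
    have hsubI : Fv G Ψ v ∩ I ∪ NI G I B ⊆ I :=
      Finset.union_subset Finset.inter_subset_right (NI_subset G)
    have h1 : (Fv G Ψ v ∩ I).card + (NI G I B).card ≤ I.card := by
      rw [← Finset.card_union_of_disjoint hdisj]
      exact Finset.card_le_card hsubI
    have h2 : (Fv G Ψ v).card = B.card + (Fv G Ψ v ∩ I).card := by
      rw [hBdef]
      rw [Finset.card_sdiff_add_card_inter]
    have h3 := card_Fv G hΨ v
    omega

lemma exists_nonTDS_witness (hΨ : IsTCPartition G Ψ) {A : Finset V}
    (hnd : ¬ TotalDomSet G A) : ∃ v : V, ∀ u ∈ A, ¬ G.Adj v u := by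
  rw [TotalDomSet] at hnd
  push_neg at hnd
  obtain ⟨v, hv⟩ := hnd
  exact ⟨v, fun u hu hadj => (hv u hu) hadj⟩

/-- single tight set -/
lemma tight_single (hΨ : IsTCPartition G Ψ) (hIsub : I ⊆ Ψ) (hI : Indep G I)
    {u : Finset V} (hu : u ∈ Ψ \ I) :
    ∃ B, u ∈ B ∧ B ⊆ Ψ \ I ∧ Indep G B ∧
      (NI G I B).card + Ψ.card ≤ B.card + G.maxDegree + I.card := by
  have huΨ := (Finset.mem_sdiff.1 hu).1
  obtain ⟨v, hv⟩ := exists_nonTDS_witness hΨ (hΨ.2.2.1 u huΨ)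
  obtain ⟨h1, h2, h3⟩ := tight_Fv hΨ hIsub hI v
  exact ⟨Fv G Ψ v \ I,
    Finset.mem_sdiff.2 ⟨(mem_Fv G).2 ⟨huΨ, hv⟩, (Finset.mem_sdiff.1 hu).2⟩, h1, h2, h3⟩

/-- pair tight set -/
lemma tight_pair (hΨ : IsTCPartition G Ψ) (hIsub : I ⊆ Ψ) (hI : Indep G I)
    {u w : Finset V} (hu : u ∈ Ψ \ I) (hw : w ∈ Ψ \ I) (hne : u ≠ w)
    (hnc : ¬ coal G u w) :
    ∃ B, u ∈ B ∧ w ∈ B ∧ B ⊆ Ψ \ I ∧ Indep G B ∧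
      (NI G I B).card + Ψ.card ≤ B.card + G.maxDegree + I.card := by
  have huΨ := (Finset.mem_sdiff.1 hu).1
  have hwΨ := (Finset.mem_sdiff.1 hw).1
  have hnd : ¬ TotalDomSet G (u ∪ w) := (not_coal_iff hΨ huΨ hwΨ hne).1 hnc
  obtain ⟨v, hv⟩ := exists_nonTDS_witness hΨ hnd
  have huF : u ∈ Fv G Ψ v :=
    (mem_Fv G).2 ⟨huΨ, fun x hx => hv x (Finset.mem_union_left _ hx)⟩
  have hwF : w ∈ Fv G Ψ v :=
    (mem_Fv G).2 ⟨hwΨ, fun x hx => hv x (Finset.mem_union_right _ hx)⟩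
  obtain ⟨h1, h2, h3⟩ := tight_Fv hΨ hIsub hI v
  exact ⟨Fv G Ψ v \ I,
    Finset.mem_sdiff.2 ⟨huF, (Finset.mem_sdiff.1 hu).2⟩,
    Finset.mem_sdiff.2 ⟨hwF, (Finset.mem_sdiff.1 hw).2⟩, h1, h2, h3⟩

end Tight


section Arith

lemma arith_notclique {Δ α r c : ℕ} (h5 : 5 ≤ Δ)
    (h4 : 4 * (α + r) = (Δ + 1) * (Δ + 3)) (hcr : r + c = Δ) (h2r : 2 ≤ r)
    (hle : α ≤ r + (r - 1) * c) : False := by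
  obtain ⟨s, rfl⟩ : ∃ s, r = 2 + s := ⟨r - 2, by omega⟩
  have hr1 : (2 + s) - 1 = 1 + s := by omega
  rw [hr1] at hle
  have hΔ : Δ = 2 + s + c := by omega
  subst hΔ
  rcases Nat.eq_zero_or_pos c with hc | hc
  · subst hc
    nlinarith [sq_nonneg s, h5, h4, hle]
  · nlinarith [sq_nonneg ((s : ℤ) - c), hc, h4, hle, h5]

lemma arith_clique {Δ α r c : ℕ} (hodd : Odd Δ)
    (h4 : 4 * (α + r) = (Δ + 1) * (Δ + 3)) (hcr : r + c = Δ)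
    (hle : α ≤ r * (c + 1)) : α = r * (c + 1) := by
  have hΔ : Δ = r + c := by omega
  subst hΔ
  have hd : Odd ((r : ℤ) - c) := by
    obtain ⟨m, hm⟩ := hodd
    refine ⟨(m : ℤ) - c, ?_⟩
    have : (r : ℤ) + c = 2 * m + 1 := by exact_mod_cast congrArg (Nat.cast : ℕ → ℤ) hm
    omega
  obtain ⟨m, hm⟩ := hd
  have key : 4 * ((r : ℤ) * (c + 2)) ≤ ((r : ℤ) + c + 1) * ((r : ℤ) + c + 3) := by
    rcases le_or_gt 1 m with hm1 | hm1
    · nlinarith [hm, hm1]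
    · nlinarith [hm, hm1]
  have h4' : 4 * ((α : ℤ) + r) = ((r : ℤ) + c + 1) * ((r : ℤ) + c + 3) := by
    exact_mod_cast congrArg (Nat.cast : ℕ → ℤ) h4
  have hge : (r : ℤ) * (c + 1) ≤ (α : ℤ) := by nlinarith [key, h4']
  have hle' : (α : ℤ) ≤ (r : ℤ) * (c + 1) := by exact_mod_cast hle
  have : (α : ℤ) = (r : ℤ) * (c + 1) := le_antisymm hle' hge
  exact_mod_cast this

end Arith

section FoldrUnion

variable {α : Type*} [DecidableEq α]

lemma mem_foldr_union {L : List (Finset α)} {x : α} :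
    x ∈ L.foldr (· ∪ ·) ∅ ↔ ∃ B ∈ L, x ∈ B := by
  induction L with
  | nil => simp
  | cons B L' ih => simp [ih]

end FoldrUnion


section Classification

variable {G : SimpleGraph V} [Fintype V] [DecidableRel G.Adj] {Ψ : Finset (Finset V)}

lemma NI_singleton {I : Finset (Finset V)} {u : Finset V} :
    NI G I {u} = I.filter (fun x => coal G u x) := by
  ext x
  simp [mem_NI]

theorem classification (hΨ : IsTCPartition G Ψ) (hodd : Odd G.maxDegree)
    (h5 : 5 ≤ G.maxDegree)
    (hk4 : 4 * Ψ.card = (G.maxDegree + 1) * (G.maxDegree + 3)) :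
    ∃ (R : Finset (Finset V)) (hub : Finset V → Finset V) (p : ℕ),
      R ⊆ Ψ ∧ 0 < R.card ∧ 0 < p ∧ R.card + p = G.maxDegree + 1 ∧
      (∀ A ∈ R, ∀ B ∈ R, A ≠ B → coal G A B) ∧
      (∀ x ∈ Ψ \ R, hub x ∈ R ∧ coal G (hub x) x) ∧
      (∀ x ∈ Ψ \ R, ∀ u ∈ R, coal G u x → u = hub x) ∧
      (∀ x ∈ Ψ \ R, ∀ y ∈ Ψ \ R, ¬ coal G x y) ∧
      (∀ u ∈ R, ((Ψ \ R).filter (fun x => hub x = u)).card = p) := by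
  classical
  set Δ := G.maxDegree with hΔdef
  obtain ⟨I, hIsub, hI, hmax⟩ := exists_max_indep (G := G) Ψ
  set R : Finset (Finset V) := Ψ \ I with hRdef
  have hRsub : R ⊆ Ψ := Finset.sdiff_subset
  have hkr : R.card + I.card = Ψ.card := Finset.card_sdiff_add_card_eq_card hIsub
  have hk12 : 12 ≤ Ψ.card := by
    have h6 : 6 ≤ Δ + 1 := by omega
    have h8 : 8 ≤ Δ + 3 := by omega
    have := Nat.mul_le_mul h6 h8
    omega
  have hΨne : Ψ.Nonempty := Finset.card_pos.1 (by omega)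
  -- r ≥ 1
  have hrpos : 0 < R.card := by
    rcases Finset.card_pos.2 hΨne with _
    by_contra h
    have hR0 : R = ∅ := by
      rw [← Finset.card_eq_zero]; omega
    have hsub : Ψ ⊆ I := by
      intro C hC
      by_contra hCI
      have : C ∈ R := Finset.mem_sdiff.2 ⟨hC, hCI⟩
      rw [hR0] at this
      exact absurd this (Finset.notMem_empty C)
    obtain ⟨C, hC⟩ := hΨne
    obtain ⟨D, hD, hDne, hTC⟩ := hΨ.2.2.2 C hC
    exact hI C (hsub hC) D (hsub hD) (Ne.symm hDne) ⟨Ne.symm hDne, hTC⟩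
  -- r ≤ Δ
  have hrΔ : R.card ≤ Δ := by
    obtain ⟨C, hC⟩ := hΨne
    obtain ⟨x0, hx0⟩ := hΨ.1 C hC
    have h1 := card_Fv G hΨ x0
    have h2 : (Fv G Ψ x0).card ≤ I.card :=
      hmax _ (Fv_subset G x0) (Fv_indep G hΨ x0)
    omega
  set c : ℕ := Δ - R.card with hcdef
  have hcr : R.card + c = Δ := by omega
  -- cover
  have hcover : ∀ x ∈ I, ∃ u ∈ R, coal G u x := by
    intro x hx
    obtain ⟨D, hD, hDne, hTC⟩ := hΨ.2.2.2 x (hIsub hx)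
    have hcoal : coal G D x := coal_symm G ⟨Ne.symm hDne, hTC⟩
    refine ⟨D, ?_, hcoal⟩
    rw [hRdef, Finset.mem_sdiff]
    refine ⟨hD, fun hDI => ?_⟩
    exact hI D hDI x hx hDne hcoal
  -- tight sets give the c-bound form
  have tight_bound : ∀ B : Finset (Finset V),
      ((NI G I B).card + Ψ.card ≤ B.card + Δ + I.card) →
      (NI G I B).card ≤ B.card + c := by
    intro B h
    omega
  by_cases hclique : ∀ A ∈ R, ∀ B ∈ R, A ≠ B → coal G A B
  swap
  · -- R is not a clique: contradiction
    exfalso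
    push_neg at hclique
    obtain ⟨u0, hu0, w0, hw0, hne0, hnc0⟩ := hclique
    obtain ⟨B0, hu0B, hw0B, hB0sub, hB0ind, hB0card⟩ :=
      tight_pair hΨ hIsub hI hu0 hw0 hne0 hnc0
    have hB0two : 2 ≤ B0.card := Finset.one_lt_card.2 ⟨u0, hu0B, w0, hw0B, hne0⟩
    -- choose tight sets for the rest
    have hRB0 : ∀ z ∈ R \ B0, z ∈ Ψ \ I := fun z hz => (Finset.mem_sdiff.1 hz).1
    choose! f hf1 hf2 hf3 hf4 using
      (fun z (hz : z ∈ R \ B0) => tight_single hΨ hIsub hI (hRB0 z hz))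
    set L : List (Finset (Finset V)) :=
      B0 :: ((R \ B0).attach.toList.map (fun z => f z.1)) with hLdef
    have hLmem : ∀ B ∈ L, B ⊆ Ψ \ I ∧ Indep G B ∧ (NI G I B).card ≤ B.card + c := by
      intro B hB
      rw [hLdef, List.mem_cons] at hB
      rcases hB with rfl | hB
      · exact ⟨hB0sub, hB0ind, tight_bound _ hB0card⟩
      · simp only [List.mem_map] at hB
        obtain ⟨z, hz, rfl⟩ := hB
        have hzz : z.1 ∈ R \ B0 := z.2
        exact ⟨hf2 z.1 hzz, hf3 z.1 hzz, tight_bound _ (hf4 z.1 hzz)⟩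
    have hUB := union_bound hIsub hI hmax c L hLmem
    set U : Finset (Finset V) := L.foldr (· ∪ ·) ∅ with hUdef
    have hUR : U ⊆ R := by
      intro x hx
      obtain ⟨B, hB, hxB⟩ := mem_foldr_union.1 hx
      exact (hLmem B hB).1 hxB
    have hRU : R ⊆ U := by
      intro z hz
      by_cases hzB0 : z ∈ B0
      · exact mem_foldr_union.2 ⟨B0, by simp [hLdef], hzB0⟩
      · have hzRB : z ∈ R \ B0 := Finset.mem_sdiff.2 ⟨hz, hzB0⟩
        refine mem_foldr_union.2 ⟨f z, ?_, hf1 z hzRB⟩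
        rw [hLdef]
        simp only [List.mem_cons, List.mem_map]
        exact Or.inr ⟨⟨z, hzRB⟩, by simp, rfl⟩
    have hUeq : U = R := Finset.Subset.antisymm hUR hRU
    have hIN : I ⊆ NI G I U := by
      intro x hx
      obtain ⟨u, hu, hc⟩ := hcover x hx
      exact (mem_NI G).2 ⟨hx, u, hUeq ▸ hu, hc⟩
    have hLlen : L.length = 1 + (R \ B0).card := by
      rw [hLdef]
      simp [Nat.add_comm]
    have hRB0card : (R \ B0).card + B0.card = R.card :=
      Finset.card_sdiff_add_card_eq_card hB0sub
    have halpha : I.card ≤ R.card + (R.card - 1) * c := by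
      have h1 : I.card ≤ (NI G I U).card := Finset.card_le_card hIN
      have h2 : U.card = R.card := by rw [hUeq]
      have h3 : L.length ≤ R.card - 1 := by omega
      have h4 : L.length * c ≤ (R.card - 1) * c := Nat.mul_le_mul_right c h3
      omega
    exact arith_notclique h5 (by omega) hcr (by omega) halpha
  · -- R is a clique
    -- each NI {u} has card ≤ c + 1
    have hNIu : ∀ u ∈ R, (NI G I {u}).card ≤ c + 1 := by
      intro u hu
      have huΨI : u ∈ Ψ \ I := hu
      obtain ⟨B, huB, hBsub, hBind, hBcard⟩ := tight_single hΨ hIsub hI huΨI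
      have hBu : B = {u} := by
        apply Finset.Subset.antisymm
        · intro b hb
          rw [Finset.mem_singleton]
          by_contra hbne
          exact hBind b hb u huB hbne (hclique b (hBsub hb) u hu hbne)
        · intro b hb
          rw [Finset.mem_singleton] at hb
          exact hb ▸ huB
      have h' := tight_bound B hBcard
      rw [hBu] at h'
      simp only [Finset.card_singleton] at h'
      omega
    -- cover: I ⊆ biUnion
    have hbi : I ⊆ R.biUnion (fun u => NI G I {u}) := by
      intro x hx
      obtain ⟨u, hu, hc⟩ := hcover x hx
      exact Finset.mem_biUnion.2 ⟨u, hu, (mem_NI G).2 ⟨hx, u, Finset.mem_singleton_self u, hc⟩⟩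
    have hsum_ub : ∑ u ∈ R, (NI G I {u}).card ≤ R.card * (c + 1) := by
      calc ∑ u ∈ R, (NI G I {u}).card ≤ ∑ u ∈ R, (c + 1) :=
            Finset.sum_le_sum (fun u hu => hNIu u hu)
        _ = R.card * (c + 1) := by rw [Finset.sum_const, smul_eq_mul]
    have halpha_le : I.card ≤ R.card * (c + 1) := by
      calc I.card ≤ (R.biUnion (fun u => NI G I {u})).card := Finset.card_le_card hbi
        _ ≤ ∑ u ∈ R, (NI G I {u}).card := Finset.card_biUnion_le
        _ ≤ R.card * (c + 1) := hsum_ub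
    have halpha : I.card = R.card * (c + 1) :=
      arith_clique hodd (by omega) hcr halpha_le
    -- each term equals c+1
    have hNIu_eq : ∀ u ∈ R, (NI G I {u}).card = c + 1 := by
      by_contra h
      push_neg at h
      obtain ⟨u0, hu0, hne⟩ := h
      have hlt : (NI G I {u0}).card < c + 1 := lt_of_le_of_ne (hNIu u0 hu0) hne
      have : ∑ u ∈ R, (NI G I {u}).card < R.card * (c + 1) := by
        calc ∑ u ∈ R, (NI G I {u}).card < ∑ u ∈ R, (c + 1) :=
              Finset.sum_lt_sum (fun u hu => hNIu u hu) ⟨u0, hu0, hlt⟩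
          _ = R.card * (c + 1) := by rw [Finset.sum_const, smul_eq_mul]
      have h2 : I.card ≤ ∑ u ∈ R, (NI G I {u}).card := by
        calc I.card ≤ (R.biUnion (fun u => NI G I {u})).card := Finset.card_le_card hbi
          _ ≤ ∑ u ∈ R, (NI G I {u}).card := Finset.card_biUnion_le
      omega
    -- double counting : hubs of each x
    have hdouble : ∑ u ∈ R, (NI G I {u}).card
        = ∑ x ∈ I, (R.filter (fun u => coal G u x)).card := by
      have h1 : ∀ u, (NI G I {u}).card = ∑ x ∈ I, if coal G u x then 1 else 0 := by
        intro u
        rw [NI_singleton, Finset.card_filter]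
      have h2 : ∀ x, (R.filter (fun u => coal G u x)).card
          = ∑ u ∈ R, if coal G u x then 1 else 0 := by
        intro x
        rw [Finset.card_filter]
      simp only [h1, h2]
      exact Finset.sum_comm
    have hhubs1 : ∀ x ∈ I, (R.filter (fun u => coal G u x)).card = 1 := by
      by_contra h
      push_neg at h
      obtain ⟨x0, hx0, hne⟩ := h
      have hge : ∀ x ∈ I, 1 ≤ (R.filter (fun u => coal G u x)).card := by
        intro x hx
        obtain ⟨u, hu, hc⟩ := hcover x hx
        exact Finset.card_pos.2 ⟨u, Finset.mem_filter.2 ⟨hu, hc⟩⟩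
      have hgt : 1 < (R.filter (fun u => coal G u x0)).card :=
        lt_of_le_of_ne (hge x0 hx0) (Ne.symm hne)
      have : ∑ x ∈ I, 1 < ∑ x ∈ I, (R.filter (fun u => coal G u x)).card :=
        Finset.sum_lt_sum hge ⟨x0, hx0, hgt⟩
      rw [Finset.sum_const, smul_eq_mul, mul_one] at this
      have h2 : ∑ x ∈ I, (R.filter (fun u => coal G u x)).card = R.card * (c + 1) := by
        rw [← hdouble]
        calc ∑ u ∈ R, (NI G I {u}).card = ∑ u ∈ R, (c + 1) :=
              Finset.sum_congr rfl (fun u hu => hNIu_eq u hu)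
          _ = R.card * (c + 1) := by rw [Finset.sum_const, smul_eq_mul]
      omega
    -- hub function
    set hub : Finset V → Finset V := fun x =>
      if h : (R.filter (fun u => coal G u x)).Nonempty then h.choose else ∅ with hhubdef
    have hub_spec : ∀ x ∈ I, hub x ∈ R ∧ coal G (hub x) x := by
      intro x hx
      obtain ⟨u, hu, hc⟩ := hcover x hx
      have hne : (R.filter (fun u => coal G u x)).Nonempty :=
        ⟨u, Finset.mem_filter.2 ⟨hu, hc⟩⟩
      have hmem := hne.choose_spec
      rw [Finset.mem_filter] at hmem
      rw [hhubdef]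
      simp only [hne, dif_pos]
      exact hmem
    have hub_uniq : ∀ x ∈ I, ∀ u ∈ R, coal G u x → u = hub x := by
      intro x hx u hu hc
      have h1 := hhubs1 x hx
      have hcard1 : (R.filter (fun u => coal G u x)).card ≤ 1 := le_of_eq h1
      have hu' : u ∈ R.filter (fun u => coal G u x) := Finset.mem_filter.2 ⟨hu, hc⟩
      have hhub' : hub x ∈ R.filter (fun u => coal G u x) :=
        Finset.mem_filter.2 (hub_spec x hx)
      exact Finset.card_le_one.1 hcard1 u hu' (hub x) hhub'
    -- Ψ \ R = I
    have hΨR : Ψ \ R = I := by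
      rw [hRdef]
      exact Finset.sdiff_sdiff_eq_self hIsub
    -- fibers
    have hfib : ∀ u ∈ R, ((Ψ \ R).filter (fun x => hub x = u)).card = c + 1 := by
      intro u hu
      rw [hΨR]
      have : I.filter (fun x => hub x = u) = NI G I {u} := by
        ext x
        rw [NI_singleton, Finset.mem_filter, Finset.mem_filter]
        constructor
        · rintro ⟨hx, rfl⟩
          exact ⟨hx, (hub_spec x hx).2⟩
        · rintro ⟨hx, hc⟩
          exact ⟨hx, (hub_uniq x hx u hu hc).symm⟩
      rw [this]
      exact hNIu_eq u hu
    refine ⟨R, hub, c + 1, hRsub, hrpos, Nat.succ_pos c, by omega, hclique, ?_, ?_, ?_, hfib⟩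
    · intro x hx
      exact hub_spec x (hΨR ▸ hx)
    · intro x hx u hu hc
      exact hub_uniq x (hΨR ▸ hx) u hu hc
    · intro x hx y hy hc
      by_cases hxy : x = y
      · exact hc.1 (hxy ▸ rfl)
      · exact hI x (hΨR ▸ hx) y (hΨR ▸ hy) hxy hc

end Classification


section Matching

variable {G : SimpleGraph V} [Fintype V] [DecidableRel G.Adj] {Ψ : Finset (Finset V)}

/-- packaged structure data -/
def CoronaData (G : SimpleGraph V) (Ψ : Finset (Finset V)) (R : Finset (Finset V))
    (hub : Finset V → Finset V) (p : ℕ) : Prop :=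
  R ⊆ Ψ ∧ 0 < R.card ∧ 0 < p ∧
  (∀ A ∈ R, ∀ B ∈ R, A ≠ B → coal G A B) ∧
  (∀ x ∈ Ψ \ R, hub x ∈ R ∧ coal G (hub x) x) ∧
  (∀ x ∈ Ψ \ R, ∀ u ∈ R, coal G u x → u = hub x) ∧
  (∀ x ∈ Ψ \ R, ∀ y ∈ Ψ \ R, ¬ coal G x y) ∧
  (∀ u ∈ R, ((Ψ \ R).filter (fun x => hub x = u)).card = p)

lemma matching_le (hΨ : IsTCPartition G Ψ) {R : Finset (Finset V)}
    {hub : Finset V → Finset V} {p : ℕ} (hD : CoronaData G Ψ R hub p)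
    {m : ℕ} (h : HasMatchingOfSize G Ψ m) : m ≤ R.card := by
  classical
  obtain ⟨A, B, hA, hB, hinj, hTC⟩ := h
  have hAB : ∀ i j, A i ≠ B j := by
    intro i j hEq
    have : (Sum.elim A B) (Sum.inl i) = (Sum.elim A B) (Sum.inr j) := hEq
    exact absurd (hinj this) (by simp)
  have hcoal : ∀ i, coal G (A i) (B i) := fun i => ⟨hAB i i, hTC i⟩
  have hor : ∀ i, A i ∈ R ∨ B i ∈ R := by
    intro i
    by_contra h
    push_neg at h
    exact hD.2.2.2.2.2.2.1 (A i) (Finset.mem_sdiff.2 ⟨hA i, h.1⟩)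
      (B i) (Finset.mem_sdiff.2 ⟨hB i, h.2⟩) (hcoal i)
  set g : Fin m → Finset V := fun i => if A i ∈ R then A i else B i with hgdef
  have hgR : ∀ i, g i ∈ R := by
    intro i
    rw [hgdef]
    rcases hor i with h | h
    · simp [h]
    · by_cases h' : A i ∈ R <;> simp [h', h]
  have hginj : Function.Injective g := by
    intro i j hEq
    rw [hgdef] at hEq
    simp only at hEq
    by_cases hi : A i ∈ R <;> by_cases hj : A j ∈ R <;> simp [hi, hj] at hEq
    · have : (Sum.elim A B) (Sum.inl i) = (Sum.elim A B) (Sum.inl j) := hEq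
      have := hinj this
      simpa using this
    · exact absurd hEq (hAB i j)
    · exact absurd hEq.symm (hAB j i)
    · have : (Sum.elim A B) (Sum.inr i) = (Sum.elim A B) (Sum.inr j) := hEq
      have := hinj this
      simpa using this
  have := Finset.card_le_card_of_injOn (s := (Finset.univ : Finset (Fin m))) g
    (fun i _ => hgR i) (Function.Injective.injOn hginj)
  simpa using this

lemma matching_ge (hΨ : IsTCPartition G Ψ) {R : Finset (Finset V)}
    {hub : Finset V → Finset V} {p : ℕ} (hD : CoronaData G Ψ R hub p) :
    HasMatchingOfSize G Ψ R.card := by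
  classical
  have hfib : ∀ u ∈ R, ∃ x, x ∈ Ψ \ R ∧ hub x = u := by
    intro u hu
    have := hD.2.2.2.2.2.2.2 u hu
    have hpos : 0 < ((Ψ \ R).filter (fun x => hub x = u)).card := by
      rw [this]; exact hD.2.2.1
    obtain ⟨x, hx⟩ := Finset.card_pos.1 hpos
    rw [Finset.mem_filter] at hx
    exact ⟨x, hx.1, hx.2⟩
  choose! leaf hleaf1 hleaf2 using hfib
  set e := R.equivFin with hedef
  refine ⟨fun i => (e.symm i : Finset V), fun i => leaf ((e.symm i : Finset V)), ?_, ?_, ?_, ?_⟩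
  · intro i
    exact hD.1 (e.symm i).2
  · intro i
    exact (Finset.mem_sdiff.1 (hleaf1 _ (e.symm i).2)).1
  · intro x y hxy
    have hAR : ∀ i : Fin R.card, ((e.symm i : Finset V)) ∈ R := fun i => (e.symm i).2
    have hBR : ∀ i : Fin R.card, leaf ((e.symm i : Finset V)) ∈ Ψ \ R :=
      fun i => hleaf1 _ (e.symm i).2
    have hAinj : ∀ i j : Fin R.card,
        (e.symm i : Finset V) = (e.symm j : Finset V) → i = j := by
      intro i j h
      have : e.symm i = e.symm j := Subtype.ext h
      exact e.symm.injective this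
    match x, y with
    | Sum.inl i, Sum.inl j =>
      simp only [Sum.elim_inl] at hxy
      exact congrArg Sum.inl (hAinj i j hxy)
    | Sum.inl i, Sum.inr j =>
      exfalso
      simp only [Sum.elim_inl, Sum.elim_inr] at hxy
      exact (Finset.mem_sdiff.1 (hBR j)).2 (hxy ▸ hAR i)
    | Sum.inr i, Sum.inl j =>
      exfalso
      simp only [Sum.elim_inl, Sum.elim_inr] at hxy
      exact (Finset.mem_sdiff.1 (hBR i)).2 (hxy ▸ hAR j)
    | Sum.inr i, Sum.inr j =>
      simp only [Sum.elim_inr] at hxy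
      have h1 : (e.symm i : Finset V) = (e.symm j : Finset V) := by
        rw [← hleaf2 _ (e.symm i).2, ← hleaf2 _ (e.symm j).2, hxy]
      exact congrArg Sum.inr (hAinj i j h1)
  · intro i
    have hu := (e.symm i).2
    have h1 := hD.2.2.2.2.1 (leaf ((e.symm i : Finset V))) (hleaf1 _ hu)
    rw [hleaf2 _ hu] at h1
    exact h1.2.2

lemma hasMatching_mono (h : HasMatchingOfSize G Ψ n) (hmn : m ≤ n) :
    HasMatchingOfSize G Ψ m := by
  obtain ⟨A, B, hA, hB, hinj, hTC⟩ := h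
  refine ⟨A ∘ Fin.castLE hmn, B ∘ Fin.castLE hmn, fun i => hA _, fun i => hB _, ?_,
    fun i => hTC _⟩
  have hcast : Function.Injective (Fin.castLE hmn) := Fin.castLE_injective hmn
  intro x y hxy
  match x, y with
  | Sum.inl i, Sum.inl j =>
    have : (Sum.elim A B) (Sum.inl (Fin.castLE hmn i)) =
        (Sum.elim A B) (Sum.inl (Fin.castLE hmn j)) := hxy
    have := hinj this
    simp only [Sum.inl.injEq] at this
    exact congrArg Sum.inl (hcast this)
  | Sum.inl i, Sum.inr j =>
    have : (Sum.elim A B) (Sum.inl (Fin.castLE hmn i)) =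
        (Sum.elim A B) (Sum.inr (Fin.castLE hmn j)) := hxy
    exact absurd (hinj this) (by simp)
  | Sum.inr i, Sum.inl j =>
    have : (Sum.elim A B) (Sum.inr (Fin.castLE hmn i)) =
        (Sum.elim A B) (Sum.inl (Fin.castLE hmn j)) := hxy
    exact absurd (hinj this) (by simp)
  | Sum.inr i, Sum.inr j =>
    have : (Sum.elim A B) (Sum.inr (Fin.castLE hmn i)) =
        (Sum.elim A B) (Sum.inr (Fin.castLE hmn j)) := hxy
    have := hinj this
    simp only [Sum.inr.injEq] at this
    exact congrArg Sum.inr (hcast this)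

lemma matchNum_eq (hΨ : IsTCPartition G Ψ) {R : Finset (Finset V)}
    {hub : Finset V → Finset V} {p : ℕ} (hD : CoronaData G Ψ R hub p) :
    matchNum G Ψ = R.card := by
  have hset : {m | HasMatchingOfSize G Ψ m} = Set.Iic R.card := by
    ext m
    simp only [Set.mem_setOf_eq, Set.mem_Iic]
    exact ⟨matching_le hΨ hD, fun h => hasMatching_mono (matching_ge hΨ hD) h⟩
  rw [matchNum, hset, csSup_Iic]

end Matching


section Iso

variable {G : SimpleGraph V} [Fintype V] [DecidableRel G.Adj]
  {Ψ Ψ' : Finset (Finset V)}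

lemma TCG_adj_iff {C D : {C // C ∈ Ψ}} :
    (TCG G Ψ).Adj C D ↔ coal G (C : Finset V) (D : Finset V) := by
  constructor
  · rintro ⟨hne, hTC⟩
    exact ⟨fun h => hne (Subtype.ext h), hTC⟩
  · rintro ⟨hne, hTC⟩
    exact ⟨fun h => hne (congrArg _ h), hTC⟩

/-- characterisation of adjacency from corona data -/
lemma coal_char {R : Finset (Finset V)} {hub : Finset V → Finset V} {p : ℕ}
    (hD : CoronaData G Ψ R hub p) {x y : Finset V} (hx : x ∈ Ψ) (hy : y ∈ Ψ) :
    coal G x y ↔ ((x ∈ R ∧ y ∈ R ∧ x ≠ y) ∨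
      (x ∈ R ∧ y ∈ Ψ \ R ∧ hub y = x) ∨ (x ∈ Ψ \ R ∧ y ∈ R ∧ hub x = y)) := by
  obtain ⟨hRsub, hrpos, hppos, hclique, hhub, huniq, hleaf, hfib⟩ := hD
  constructor
  · intro hc
    by_cases hxR : x ∈ R <;> by_cases hyR : y ∈ R
    · exact Or.inl ⟨hxR, hyR, hc.1⟩
    · exact Or.inr (Or.inl ⟨hxR, Finset.mem_sdiff.2 ⟨hy, hyR⟩,
        (huniq y (Finset.mem_sdiff.2 ⟨hy, hyR⟩) x hxR hc).symm⟩)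
    · exact Or.inr (Or.inr ⟨Finset.mem_sdiff.2 ⟨hx, hxR⟩, hyR,
        (huniq x (Finset.mem_sdiff.2 ⟨hx, hxR⟩) y hyR (coal_symm G hc)).symm⟩)
    · exact absurd hc (hleaf x (Finset.mem_sdiff.2 ⟨hx, hxR⟩)
        y (Finset.mem_sdiff.2 ⟨hy, hyR⟩))
  · rintro (⟨hxR, hyR, hne⟩ | ⟨hxR, hyL, hhy⟩ | ⟨hxL, hyR, hhx⟩)
    · exact hclique x hxR y hyR hne
    · exact hhy ▸ (hhub y hyL).2
    · exact coal_symm G (hhx ▸ (hhub x hxL).2)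

/-- the fibers -/
noncomputable def fib (Ψ R : Finset (Finset V)) (hub : Finset V → Finset V)
    (u : Finset V) : Finset (Finset V) :=
  (Ψ \ R).filter (fun x => hub x = u)

lemma mem_fib {R : Finset (Finset V)} {hub : Finset V → Finset V} {u x : Finset V} :
    x ∈ fib Ψ R hub u ↔ x ∈ Ψ \ R ∧ hub x = u := by simp [fib]

theorem iso_of_data {R R' : Finset (Finset V)} {hub hub' : Finset V → Finset V} {p : ℕ}
    (hΨ : IsTCPartition G Ψ) (hΨ' : IsTCPartition G Ψ')
    (hD : CoronaData G Ψ R hub p) (hD' : CoronaData G Ψ' R' hub' p)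
    (hcard : R.card = R'.card) :
    Nonempty (TCG G Ψ ≃g TCG G Ψ') := by
  classical
  -- hub bijection
  have φ : {u // u ∈ R} ≃ {u // u ∈ R'} :=
    R.equivFin.trans ((finCongr hcard).trans R'.equivFin.symm)
  -- fiber bijections
  have ψ : ∀ w : {u // u ∈ R},
      {x // x ∈ fib Ψ R hub ↑w} ≃ {y // y ∈ fib Ψ' R' hub' ↑(φ w)} := by
    intro w
    refine (fib Ψ R hub ↑w).equivFin.trans ((finCongr ?_).trans
      (fib Ψ' R' hub' ↑(φ w)).equivFin.symm)
    rw [show (fib Ψ R hub ↑w) = ((Ψ \ R).filter (fun x => hub x = ↑w)) from rfl,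
      show (fib Ψ' R' hub' ↑(φ w)) = ((Ψ' \ R').filter (fun x => hub' x = ↑(φ w))) from rfl]
    rw [hD.2.2.2.2.2.2.2 ↑w w.2, hD'.2.2.2.2.2.2.2 ↑(φ w) (φ w).2]
  -- transport helpers
  have ψcongr : ∀ (w w' : {u // u ∈ R}) (hww : w = w')
      (a : {x // x ∈ fib Ψ R hub ↑w}) (b : {x // x ∈ fib Ψ R hub ↑w'}),
      (a : Finset V) = ↑b → (↑(ψ w a) : Finset V) = ↑(ψ w' b) := by
    rintro w w' rfl a b h
    exact congrArg _ (congrArg _ (Subtype.ext h))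
  -- membership facts for fwd
  have hmemR' : ∀ w : {u // u ∈ R}, (↑(φ w) : Finset V) ∈ R' := fun w => (φ w).2
  have hfwdleafmem : ∀ (w : {u // u ∈ R}) (a : {x // x ∈ fib Ψ R hub ↑w}),
      (↑(ψ w a) : Finset V) ∈ Ψ' \ R' ∧ hub' ↑(ψ w a) = ↑(φ w) := by
    intro w a
    have := (ψ w a).2
    rw [mem_fib] at this
    exact this
  -- the forward map
  set fwd : {C // C ∈ Ψ} → {C // C ∈ Ψ'} := fun C =>
    if h : (C : Finset V) ∈ R then
      ⟨↑(φ ⟨↑C, h⟩), hD'.1 (hmemR' ⟨↑C, h⟩)⟩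
    else
      have hCl : (C : Finset V) ∈ Ψ \ R := Finset.mem_sdiff.2 ⟨C.2, h⟩
      have hhubC : hub ↑C ∈ R := (hD.2.2.2.2.1 ↑C hCl).1
      have hfibC : (C : Finset V) ∈ fib Ψ R hub (hub ↑C) := mem_fib.2 ⟨hCl, rfl⟩
      ⟨↑(ψ ⟨hub ↑C, hhubC⟩ ⟨↑C, hfibC⟩),
        (Finset.mem_sdiff.1 (hfwdleafmem ⟨hub ↑C, hhubC⟩ ⟨↑C, hfibC⟩).1).1⟩
    with hfwddef
  -- computation lemmas
  have fwd_hub : ∀ (C : {C // C ∈ Ψ}) (h : (C : Finset V) ∈ R),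
      (↑(fwd C) : Finset V) = ↑(φ ⟨↑C, h⟩) := by
    intro C h
    rw [hfwddef]
    simp only [h, dif_pos]
  have fwd_leaf : ∀ (C : {C // C ∈ Ψ}) (h : (C : Finset V) ∉ R)
      (hhubC : hub ↑C ∈ R) (hfibC : (C : Finset V) ∈ fib Ψ R hub (hub ↑C)),
      (↑(fwd C) : Finset V) = ↑(ψ ⟨hub ↑C, hhubC⟩ ⟨↑C, hfibC⟩) := by
    intro C h hhubC hfibC
    rw [hfwddef]
    simp only [h, dif_neg, not_false_iff]
  -- fwd value memberships
  have fwd_memR : ∀ (C : {C // C ∈ Ψ}), ((C : Finset V) ∈ R) ↔ ((fwd C : Finset V) ∈ R') := by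
    intro C
    constructor
    · intro h
      rw [fwd_hub C h]
      exact hmemR' _
    · intro h
      by_contra hC
      have hCl : (C : Finset V) ∈ Ψ \ R := Finset.mem_sdiff.2 ⟨C.2, hC⟩
      have hhubC : hub ↑C ∈ R := (hD.2.2.2.2.1 ↑C hCl).1
      have hfibC : (C : Finset V) ∈ fib Ψ R hub (hub ↑C) := mem_fib.2 ⟨hCl, rfl⟩
      rw [fwd_leaf C hC hhubC hfibC] at h
      exact (Finset.mem_sdiff.1 (hfwdleafmem ⟨hub ↑C, hhubC⟩ ⟨↑C, hfibC⟩).1).2 h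
  -- injectivity helper for fibers
  have ψinj : ∀ (w w' : {u // u ∈ R}) (hww : w = w')
      (a : {x // x ∈ fib Ψ R hub ↑w}) (b : {x // x ∈ fib Ψ R hub ↑w'}),
      (↑(ψ w a) : Finset V) = ↑(ψ w' b) → (a : Finset V) = ↑b := by
    rintro w w' rfl a b h
    exact congrArg _ ((ψ w).injective (Subtype.ext h))
  -- injectivity
  have hinj : Function.Injective fwd := by
    intro C D hEq
    have hEqv : (↑(fwd C) : Finset V) = ↑(fwd D) := congrArg _ hEq
    by_cases hC : (C : Finset V) ∈ R <;> by_cases hD2 : (D : Finset V) ∈ R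
    · rw [fwd_hub C hC, fwd_hub D hD2] at hEqv
      have := φ.injective (Subtype.ext hEqv)
      exact Subtype.ext (congrArg (Subtype.val : {u // u ∈ R} → Finset V) this)
    · exfalso
      have h1 := (fwd_memR C).1 hC
      have hDl : (D : Finset V) ∈ Ψ \ R := Finset.mem_sdiff.2 ⟨D.2, hD2⟩
      have hhubD : hub ↑D ∈ R := (hD.2.2.2.2.1 ↑D hDl).1
      have hfibD : (D : Finset V) ∈ fib Ψ R hub (hub ↑D) := mem_fib.2 ⟨hDl, rfl⟩
      have h2 : (↑(fwd D) : Finset V) ∉ R' := by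
        rw [fwd_leaf D hD2 hhubD hfibD]
        exact (Finset.mem_sdiff.1 (hfwdleafmem ⟨hub ↑D, hhubD⟩ ⟨↑D, hfibD⟩).1).2
      rw [hEqv] at h1
      exact h2 h1
    · exfalso
      have h1 := (fwd_memR D).1 hD2
      have hCl : (C : Finset V) ∈ Ψ \ R := Finset.mem_sdiff.2 ⟨C.2, hC⟩
      have hhubC : hub ↑C ∈ R := (hD.2.2.2.2.1 ↑C hCl).1
      have hfibC : (C : Finset V) ∈ fib Ψ R hub (hub ↑C) := mem_fib.2 ⟨hCl, rfl⟩
      have h2 : (↑(fwd C) : Finset V) ∉ R' := by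
        rw [fwd_leaf C hC hhubC hfibC]
        exact (Finset.mem_sdiff.1 (hfwdleafmem ⟨hub ↑C, hhubC⟩ ⟨↑C, hfibC⟩).1).2
      rw [← hEqv] at h1
      exact h2 h1
    · have hCl : (C : Finset V) ∈ Ψ \ R := Finset.mem_sdiff.2 ⟨C.2, hC⟩
      have hhubC : hub ↑C ∈ R := (hD.2.2.2.2.1 ↑C hCl).1
      have hfibC : (C : Finset V) ∈ fib Ψ R hub (hub ↑C) := mem_fib.2 ⟨hCl, rfl⟩
      have hDl : (D : Finset V) ∈ Ψ \ R := Finset.mem_sdiff.2 ⟨D.2, hD2⟩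
      have hhubD : hub ↑D ∈ R := (hD.2.2.2.2.1 ↑D hDl).1
      have hfibD : (D : Finset V) ∈ fib Ψ R hub (hub ↑D) := mem_fib.2 ⟨hDl, rfl⟩
      rw [fwd_leaf C hC hhubC hfibC, fwd_leaf D hD2 hhubD hfibD] at hEqv
      -- hub' of both sides
      have hh1 := (hfwdleafmem ⟨hub ↑C, hhubC⟩ ⟨↑C, hfibC⟩).2
      have hh2 := (hfwdleafmem ⟨hub ↑D, hhubD⟩ ⟨↑D, hfibD⟩).2
      rw [hEqv] at hh1
      have hφeq : φ ⟨hub ↑C, hhubC⟩ = φ ⟨hub ↑D, hhubD⟩ :=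
        Subtype.ext (hh1.symm.trans hh2)
      have hweq : (⟨hub ↑C, hhubC⟩ : {u // u ∈ R}) = ⟨hub ↑D, hhubD⟩ :=
        φ.injective hφeq
      exact Subtype.ext (ψinj _ _ hweq _ _ hEqv)
  -- surjectivity
  have hsurj : Function.Surjective fwd := by
    intro D
    by_cases hDR : (D : Finset V) ∈ R'
    · refine ⟨⟨↑(φ.symm ⟨↑D, hDR⟩), hD.1 (φ.symm ⟨↑D, hDR⟩).2⟩, ?_⟩
      apply Subtype.ext
      rw [fwd_hub _ (φ.symm ⟨↑D, hDR⟩).2]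
      have h1 : (⟨↑(φ.symm ⟨↑D, hDR⟩), (φ.symm ⟨↑D, hDR⟩).2⟩ : {u // u ∈ R})
          = φ.symm ⟨↑D, hDR⟩ := Subtype.ext rfl
      rw [h1, Equiv.apply_symm_apply]
    · have hDl : (D : Finset V) ∈ Ψ' \ R' := Finset.mem_sdiff.2 ⟨D.2, hDR⟩
      have hhubD : hub' ↑D ∈ R' := (hD'.2.2.2.2.1 ↑D hDl).1
      obtain ⟨w, hw⟩ : ∃ w : {u // u ∈ R}, φ w = ⟨hub' ↑D, hhubD⟩ :=
        ⟨φ.symm ⟨hub' ↑D, hhubD⟩, Equiv.apply_symm_apply φ _⟩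
      have hφw : (↑(φ w) : Finset V) = hub' ↑D :=
        congrArg (Subtype.val : {u // u ∈ R'} → Finset V) hw
      have hb : (D : Finset V) ∈ fib Ψ' R' hub' ↑(φ w) := by
        rw [hφw]
        exact mem_fib.2 ⟨hDl, rfl⟩
      obtain ⟨a, ha⟩ : ∃ a : {x // x ∈ fib Ψ R hub ↑w}, ψ w a = ⟨↑D, hb⟩ :=
        ⟨(ψ w).symm ⟨↑D, hb⟩, Equiv.apply_symm_apply (ψ w) _⟩
      have haΨ : (a : Finset V) ∈ Ψ := by
        have := a.2
        rw [mem_fib] at this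
        exact (Finset.mem_sdiff.1 this.1).1
      have haR : (a : Finset V) ∉ R := by
        have := a.2
        rw [mem_fib] at this
        exact (Finset.mem_sdiff.1 this.1).2
      have hahub : hub ↑a = ↑w := by
        have := a.2
        rw [mem_fib] at this
        exact this.2
      refine ⟨⟨↑a, haΨ⟩, ?_⟩
      apply Subtype.ext
      have hCl : ((⟨↑a, haΨ⟩ : {C // C ∈ Ψ}) : Finset V) ∈ Ψ \ R :=
        Finset.mem_sdiff.2 ⟨haΨ, haR⟩
      have hhubC : hub ↑a ∈ R := (hD.2.2.2.2.1 ↑a hCl).1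
      have hfibC : (↑a : Finset V) ∈ fib Ψ R hub (hub ↑a) := mem_fib.2 ⟨hCl, rfl⟩
      rw [fwd_leaf ⟨↑a, haΨ⟩ haR hhubC hfibC]
      have hweq : (⟨hub ↑a, hhubC⟩ : {u // u ∈ R}) = w := Subtype.ext hahub
      have hstep : (↑(ψ ⟨hub ↑a, hhubC⟩ ⟨↑a, hfibC⟩) : Finset V) = ↑(ψ w a) :=
        ψcongr _ _ hweq _ _ rfl
      rw [hstep, ha]
  set e : {C // C ∈ Ψ} ≃ {C // C ∈ Ψ'} := Equiv.ofBijective fwd ⟨hinj, hsurj⟩ with hedef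
  have he_apply : ∀ C, e C = fwd C := fun C => rfl
  -- the isomorphism
  refine ⟨⟨e, ?_⟩⟩
  intro C D
  rw [he_apply, he_apply, TCG_adj_iff, TCG_adj_iff,
    coal_char hD' (fwd C).2 (fwd D).2, coal_char hD C.2 D.2]
  by_cases hC : (C : Finset V) ∈ R <;> by_cases hD2 : (D : Finset V) ∈ R
  · -- both hubs
    have h1 := (fwd_memR C).1 hC
    have h2 := (fwd_memR D).1 hD2
    have hne_iff : (↑(fwd C) : Finset V) ≠ ↑(fwd D) ↔ (C : Finset V) ≠ ↑D := by
      rw [fwd_hub C hC, fwd_hub D hD2]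
      constructor
      · intro h hceq
        exact h (congrArg _ (congrArg φ (Subtype.ext hceq)))
      · intro h hfeq
        exact h (congrArg (Subtype.val : {u // u ∈ R} → Finset V)
          (φ.injective (Subtype.ext hfeq)))
    constructor
    · rintro (⟨_, _, hne⟩ | ⟨_, hmem, _⟩ | ⟨hmem, _, _⟩)
      · exact Or.inl ⟨hC, hD2, hne_iff.1 hne⟩
      · exact absurd h2 (Finset.mem_sdiff.1 hmem).2
      · exact absurd h1 (Finset.mem_sdiff.1 hmem).2
    · rintro (⟨_, _, hne⟩ | ⟨_, hmem, _⟩ | ⟨hmem, _, _⟩)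
      · exact Or.inl ⟨h1, h2, hne_iff.2 hne⟩
      · exact absurd hD2 (Finset.mem_sdiff.1 hmem).2
      · exact absurd hC (Finset.mem_sdiff.1 hmem).2
  · -- C hub, D leaf
    have h1 := (fwd_memR C).1 hC
    have hDl : (D : Finset V) ∈ Ψ \ R := Finset.mem_sdiff.2 ⟨D.2, hD2⟩
    have hhubD : hub ↑D ∈ R := (hD.2.2.2.2.1 ↑D hDl).1
    have hfibD : (D : Finset V) ∈ fib Ψ R hub (hub ↑D) := mem_fib.2 ⟨hDl, rfl⟩
    have h2 : (↑(fwd D) : Finset V) ∈ Ψ' \ R' := by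
      rw [fwd_leaf D hD2 hhubD hfibD]
      exact (hfwdleafmem ⟨hub ↑D, hhubD⟩ ⟨↑D, hfibD⟩).1
    have hhub_iff : hub' ↑(fwd D) = ↑(fwd C) ↔ hub ↑D = ↑C := by
      rw [fwd_hub C hC, fwd_leaf D hD2 hhubD hfibD,
        (hfwdleafmem ⟨hub ↑D, hhubD⟩ ⟨↑D, hfibD⟩).2]
      constructor
      · intro h
        exact congrArg (Subtype.val : {u // u ∈ R} → Finset V)
          (φ.injective (Subtype.ext h))
      · intro h
        exact congrArg _ (congrArg φ (Subtype.ext h))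
    constructor
    · rintro (⟨_, hmem, _⟩ | ⟨hCR', hDL', hh⟩ | ⟨hmem, _, _⟩)
      · exact absurd hmem (Finset.mem_sdiff.1 h2).2
      · exact Or.inr (Or.inl ⟨hC, hDl, hhub_iff.1 hh⟩)
      · exact absurd h1 (Finset.mem_sdiff.1 hmem).2
    · rintro (⟨_, hmem, _⟩ | ⟨_, _, hh⟩ | ⟨hmem, _, _⟩)
      · exact absurd hmem (Finset.mem_sdiff.1 hDl).2
      · exact Or.inr (Or.inl ⟨h1, h2, hhub_iff.2 hh⟩)
      · exact absurd hC (Finset.mem_sdiff.1 hmem).2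
  · -- C leaf, D hub
    have h2 := (fwd_memR D).1 hD2
    have hCl : (C : Finset V) ∈ Ψ \ R := Finset.mem_sdiff.2 ⟨C.2, hC⟩
    have hhubC : hub ↑C ∈ R := (hD.2.2.2.2.1 ↑C hCl).1
    have hfibC : (C : Finset V) ∈ fib Ψ R hub (hub ↑C) := mem_fib.2 ⟨hCl, rfl⟩
    have h1 : (↑(fwd C) : Finset V) ∈ Ψ' \ R' := by
      rw [fwd_leaf C hC hhubC hfibC]
      exact (hfwdleafmem ⟨hub ↑C, hhubC⟩ ⟨↑C, hfibC⟩).1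
    have hhub_iff : hub' ↑(fwd C) = ↑(fwd D) ↔ hub ↑C = ↑D := by
      rw [fwd_hub D hD2, fwd_leaf C hC hhubC hfibC,
        (hfwdleafmem ⟨hub ↑C, hhubC⟩ ⟨↑C, hfibC⟩).2]
      constructor
      · intro h
        exact congrArg (Subtype.val : {u // u ∈ R} → Finset V)
          (φ.injective (Subtype.ext h))
      · intro h
        exact congrArg _ (congrArg φ (Subtype.ext h))
    constructor
    · rintro (⟨hmem, _, _⟩ | ⟨hmem, _, _⟩ | ⟨hCL', hDR', hh⟩)
      · exact absurd hmem (Finset.mem_sdiff.1 h1).2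
      · exact absurd hmem (Finset.mem_sdiff.1 h1).2
      · exact Or.inr (Or.inr ⟨hCl, hD2, hhub_iff.1 hh⟩)
    · rintro (⟨hmem, _, _⟩ | ⟨hmem, _, _⟩ | ⟨_, _, hh⟩)
      · exact absurd hmem (Finset.mem_sdiff.1 hCl).2
      · exact absurd hmem (Finset.mem_sdiff.1 hCl).2
      · exact Or.inr (Or.inr ⟨h1, h2, hhub_iff.2 hh⟩)
  · -- both leaves: both sides false
    have hCl : (C : Finset V) ∈ Ψ \ R := Finset.mem_sdiff.2 ⟨C.2, hC⟩
    have hDl : (D : Finset V) ∈ Ψ \ R := Finset.mem_sdiff.2 ⟨D.2, hD2⟩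
    have h1 : (↑(fwd C) : Finset V) ∉ R' := fun h => hC ((fwd_memR C).2 h)
    have h2 : (↑(fwd D) : Finset V) ∉ R' := fun h => hD2 ((fwd_memR D).2 h)
    constructor
    · rintro (⟨hmem, _, _⟩ | ⟨hmem, _, _⟩ | ⟨_, hmem, _⟩)
      · exact absurd hmem h1
      · exact absurd hmem h1
      · exact absurd hmem h2
    · rintro (⟨hmem, _, _⟩ | ⟨hmem, _, _⟩ | ⟨_, hmem, _⟩)
      · exact absurd hmem (Finset.mem_sdiff.1 hCl).2
      · exact absurd hmem (Finset.mem_sdiff.1 hCl).2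
      · exact absurd hmem (Finset.mem_sdiff.1 hDl).2


end Iso


section Main

lemma odd_four_div {Δ : ℕ} (hodd : Odd Δ) :
    4 * ((Δ + 1) * (Δ + 3) / 4) = (Δ + 1) * (Δ + 3) := by
  obtain ⟨m, rfl⟩ := hodd
  have h : (2 * m + 1 + 1) * (2 * m + 1 + 3) = 4 * ((m + 1) * (m + 2)) := by ring
  rw [h, Nat.mul_div_cancel_left _ (by norm_num : 0 < 4)]

end Main

end TCAux

/-- If `Δ(G)` is odd, `Δ(G) ≥ 5`, and `TC(G) = (Δ(G)+1)(Δ(G)+3)/4`, then any two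
optimal total coalition partitions of `G` whose total coalition graphs have the same
maximum matching size have isomorphic total coalition graphs. -/
theorem statement_15 [Fintype V] [DecidableEq V]
    (G : SimpleGraph V) [DecidableRel G.Adj] (hG : IsolateFree G)
    (hodd : Odd G.maxDegree) (h5 : 5 ≤ G.maxDegree)
    (hTC : TCnum G = (G.maxDegree + 1) * (G.maxDegree + 3) / 4)
    (Ψ Ψ' : Finset (Finset V)) (hΨ : IsTCPartition G Ψ) (hΨ' : IsTCPartition G Ψ')
    (hc : Ψ.card = TCnum G) (hc' : Ψ'.card = TCnum G)
    (hmatch : matchNum G Ψ = matchNum G Ψ') :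
    Nonempty (TCG G Ψ ≃g TCG G Ψ') := by
  classical
  have hk4 : 4 * Ψ.card = (G.maxDegree + 1) * (G.maxDegree + 3) := by
    rw [hc, hTC]
    exact TCAux.odd_four_div hodd
  have hk4' : 4 * Ψ'.card = (G.maxDegree + 1) * (G.maxDegree + 3) := by
    rw [hc', hTC]
    exact TCAux.odd_four_div hodd
  obtain ⟨R, hub, p, hR1, hR2, hR3, hR4, hR5, hR6, hR7, hR8, hR9⟩ :=
    TCAux.classification hΨ hodd h5 hk4
  obtain ⟨R', hub', p', hS1, hS2, hS3, hS4, hS5, hS6, hS7, hS8, hS9⟩ :=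
    TCAux.classification hΨ' hodd h5 hk4'
  have hData : TCAux.CoronaData G Ψ R hub p :=
    ⟨hR1, hR2, hR3, hR5, hR6, hR7, hR8, hR9⟩
  have hData' : TCAux.CoronaData G Ψ' R' hub' p' :=
    ⟨hS1, hS2, hS3, hS5, hS6, hS7, hS8, hS9⟩
  have hr : R.card = R'.card := by
    have e1 := TCAux.matchNum_eq hΨ hData
    have e2 := TCAux.matchNum_eq hΨ' hData'
    rw [← e1, ← e2, hmatch]
  have hp : p = p' := by omega
  subst hp
  exact TCAux.iso_of_data hΨ hΨ' hData hData' hr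
end

section
/- Let G be a finite simple isolate-free graph with maximum degree Δ(G) = 3, and let Ψ be a total coalition partition of G. If V₁, V₂, V₃, V₄, V₅, V₆ are six pairwise distinct classes of Ψ such that V₁V₂, V₂V₃, V₃V₄, V₄V₅, V₅V₆ and V₆V₁ are all total coalitions (i.e., they form a 6-cycle in the total coalition graph TCG(G,Ψ)), then each of V₁ ∪ V₄, V₂ ∪ V₅ and V₃ ∪ V₆ is a total dominating set of G, so each of these three opposite pairs forms a total coalition. -/
open scoped Classical

variable {V : Type*}

lemma disj_of_unique [DecidableEq V] {Ψ : Finset (Finset V)}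
    (hu : ∀ v : V, ∃! C, C ∈ Ψ ∧ v ∈ C) {A B : Finset V}
    (hA : A ∈ Ψ) (hB : B ∈ Ψ) (hne : A ≠ B) : Disjoint A B := by
  rw [Finset.disjoint_left]
  intro x hxA hxB
  obtain ⟨C, _, huniq⟩ := hu x
  exact hne ((huniq A ⟨hA, hxA⟩).trans (huniq B ⟨hB, hxB⟩).symm)

lemma tds_union [Fintype V] [DecidableEq V] (G : SimpleGraph V) [DecidableRel G.Adj]
    (hΔ : G.maxDegree = 3) {A B C D E F : Finset V}
    (dBC : Disjoint B C) (dBE : Disjoint B E) (dBF : Disjoint B F)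
    (dCE : Disjoint C E) (dCF : Disjoint C F) (dEF : Disjoint E F)
    (hAB : TotalDomSet G (A ∪ B)) (hCD : TotalDomSet G (C ∪ D))
    (hDE : TotalDomSet G (D ∪ E)) (hFA : TotalDomSet G (F ∪ A)) :
    TotalDomSet G (A ∪ D) := by
  intro v
  by_contra h
  push_neg at h
  obtain ⟨b, hb, hvb⟩ := hAB v
  obtain ⟨c, hc, hvc⟩ := hCD v
  obtain ⟨e, he, hve⟩ := hDE v
  obtain ⟨f, hf, hvf⟩ := hFA v
  have hbB : b ∈ B := by
    rcases Finset.mem_union.mp hb with h' | h'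
    · exact absurd hvb (h b (Finset.mem_union_left _ h'))
    · exact h'
  have hcC : c ∈ C := by
    rcases Finset.mem_union.mp hc with h' | h'
    · exact h'
    · exact absurd hvc (h c (Finset.mem_union_right _ h'))
  have heE : e ∈ E := by
    rcases Finset.mem_union.mp he with h' | h'
    · exact absurd hve (h e (Finset.mem_union_right _ h'))
    · exact h'
  have hfF : f ∈ F := by
    rcases Finset.mem_union.mp hf with h' | h'
    · exact h'
    · exact absurd hvf (h f (Finset.mem_union_left _ h'))
  have nbc : b ≠ c := fun hbc => Finset.disjoint_left.mp dBC hbB (hbc ▸ hcC)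
  have nbe : b ≠ e := fun hbe => Finset.disjoint_left.mp dBE hbB (hbe ▸ heE)
  have nbf : b ≠ f := fun hbf => Finset.disjoint_left.mp dBF hbB (hbf ▸ hfF)
  have nce : c ≠ e := fun hce => Finset.disjoint_left.mp dCE hcC (hce ▸ heE)
  have ncf : c ≠ f := fun hcf => Finset.disjoint_left.mp dCF hcC (hcf ▸ hfF)
  have nef : e ≠ f := fun hef => Finset.disjoint_left.mp dEF heE (hef ▸ hfF)
  have hsub : ({b, c, e, f} : Finset V) ⊆ G.neighborFinset v := by
    intro x hx
    simp only [Finset.mem_insert, Finset.mem_singleton] at hx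
    rw [SimpleGraph.mem_neighborFinset]
    rcases hx with rfl | rfl | rfl | rfl
    exacts [hvb, hvc, hve, hvf]
  have hcard : ({b, c, e, f} : Finset V).card = 4 := by
    rw [Finset.card_insert_of_notMem (by simp [nbc, nbe, nbf]),
        Finset.card_insert_of_notMem (by simp [nce, ncf]),
        Finset.card_insert_of_notMem (by simp [nef]),
        Finset.card_singleton]
  have h4 : 4 ≤ G.degree v := hcard ▸ Finset.card_le_card hsub
  have h3 : G.degree v ≤ 3 := hΔ ▸ G.degree_le_maxDegree v
  omega

/-- If `Δ(G) = 3` and six pairwise distinct classes of a total coalition partition form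
a `6`-cycle `V₁V₂V₃V₄V₅V₆` in the total coalition graph, then each of the unions
`V₁ ∪ V₄`, `V₂ ∪ V₅`, `V₃ ∪ V₆` is a total dominating set, so each of the three
opposite pairs forms a total coalition. -/
theorem statement_18 [Fintype V] [DecidableEq V]
    (G : SimpleGraph V) [DecidableRel G.Adj] (hG : IsolateFree G)
    (hΔ : G.maxDegree = 3)
    (Ψ : Finset (Finset V)) (hΨ : IsTCPartition G Ψ)
    (V₁ V₂ V₃ V₄ V₅ V₆ : Finset V)
    (h1 : V₁ ∈ Ψ) (h2 : V₂ ∈ Ψ) (h3 : V₃ ∈ Ψ) (h4 : V₄ ∈ Ψ) (h5 : V₅ ∈ Ψ) (h6 : V₆ ∈ Ψ)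
    (hdist : [V₁, V₂, V₃, V₄, V₅, V₆].Pairwise (· ≠ ·))
    (h12 : TotalCoalition G V₁ V₂) (h23 : TotalCoalition G V₂ V₃)
    (h34 : TotalCoalition G V₃ V₄) (h45 : TotalCoalition G V₄ V₅)
    (h56 : TotalCoalition G V₅ V₆) (h61 : TotalCoalition G V₆ V₁) :
    (TotalDomSet G (V₁ ∪ V₄) ∧ TotalCoalition G V₁ V₄) ∧
    (TotalDomSet G (V₂ ∪ V₅) ∧ TotalCoalition G V₂ V₅) ∧
    (TotalDomSet G (V₃ ∪ V₆) ∧ TotalCoalition G V₃ V₆) := by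
  simp only [List.pairwise_cons, List.mem_cons, List.mem_singleton,
    List.not_mem_nil] at hdist
  obtain ⟨hd1, hd2, hd3, hd4, hd5, -⟩ := hdist
  have hu := hΨ.2.1
  have d12 := disj_of_unique hu h1 h2 (hd1 V₂ (by tauto))
  have d13 := disj_of_unique hu h1 h3 (hd1 V₃ (by tauto))
  have d14 := disj_of_unique hu h1 h4 (hd1 V₄ (by tauto))
  have d15 := disj_of_unique hu h1 h5 (hd1 V₅ (by tauto))
  have d16 := disj_of_unique hu h1 h6 (hd1 V₆ (by tauto))
  have d23 := disj_of_unique hu h2 h3 (hd2 V₃ (by tauto))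
  have d24 := disj_of_unique hu h2 h4 (hd2 V₄ (by tauto))
  have d25 := disj_of_unique hu h2 h5 (hd2 V₅ (by tauto))
  have d26 := disj_of_unique hu h2 h6 (hd2 V₆ (by tauto))
  have d34 := disj_of_unique hu h3 h4 (hd3 V₄ (by tauto))
  have d35 := disj_of_unique hu h3 h5 (hd3 V₅ (by tauto))
  have d36 := disj_of_unique hu h3 h6 (hd3 V₆ (by tauto))
  have d45 := disj_of_unique hu h4 h5 (hd4 V₅ (by tauto))
  have d46 := disj_of_unique hu h4 h6 (hd4 V₆ (by tauto))
  have d56 := disj_of_unique hu h5 h6 (hd5 V₆ (by tauto))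
  have hnt := hΨ.2.2.1
  have t14 : TotalDomSet G (V₁ ∪ V₄) :=
    tds_union G hΔ d23 d25 d26 d35 d36 d56 h12.2.2.2 h34.2.2.2 h45.2.2.2 h61.2.2.2
  have t25 : TotalDomSet G (V₂ ∪ V₅) :=
    tds_union G hΔ d34 d36 d13.symm d46 d14.symm d16.symm
      h23.2.2.2 h45.2.2.2 h56.2.2.2 h12.2.2.2
  have t36 : TotalDomSet G (V₃ ∪ V₆) :=
    tds_union G hΔ d45 d14.symm d24.symm d15.symm d25.symm d12
      h34.2.2.2 h56.2.2.2 h61.2.2.2 h23.2.2.2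
  exact ⟨⟨t14, d14, hnt _ h1, hnt _ h4, t14⟩,
         ⟨t25, d25, hnt _ h2, hnt _ h5, t25⟩,
         ⟨t36, d36, hnt _ h3, hnt _ h6, t36⟩⟩
end
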